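/- arXiv:2410.12358 — 6 statements merged into one kernel-verified Lean document; each statement's English description precedes it below -/
import Mathlib

section
/- Let A be an n×n complex matrix with spectral radius strictly less than 1 and b ∈ ℂⁿ such that (A,b) is a reachable pair (i.e., the vectors b, Ab, …, A^{n-1}b span ℂⁿ). Define G(θ) = (I − e^{−iθ}A)^{−1} b for θ ∈ [0,2π). Then for any m ≤ n pairwise distinct angles θ₁,…,θ_m ∈ [0,2π), the vectors G(θ₁),…,G(θ_m) are linearly independent in ℂⁿ. -/
open Matrix Polynomial

lemma exp_theta_inj {α β : ℝ} (hα : α ∈ Set.Ico (0:ℝ) (2*Real.pi))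
    (hβ : β ∈ Set.Ico (0:ℝ) (2*Real.pi))
    (h : Complex.exp (-(α:ℂ) * Complex.I) = Complex.exp (-(β:ℂ) * Complex.I)) : α = β := by
  have h1 : Complex.exp (((β - α : ℝ) : ℂ) * Complex.I) = 1 := by
    rw [show ((β - α : ℝ) : ℂ) * Complex.I = (-(α:ℂ)*Complex.I) - (-(β:ℂ)*Complex.I) by
      push_cast; ring]
    rw [Complex.exp_sub, h, div_self (Complex.exp_ne_zero _)]
  rw [Complex.exp_eq_one_iff] at h1
  obtain ⟨k, hk⟩ := h1
  have him := congrArg Complex.im hk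
  simp [Complex.mul_I_im] at him
  -- him : β - α = k * (2π)  (roughly)
  have hπ := Real.pi_pos
  have hk0 : k = 0 := by
    rcases hα with ⟨hα0, hα2⟩; rcases hβ with ⟨hβ0, hβ2⟩
    by_contra hne
    rcases lt_or_gt_of_ne hne with hlt | hgt
    · have : (k:ℝ) ≤ -1 := by exact_mod_cast show k ≤ -1 by omega
      nlinarith
    · have : (1:ℝ) ≤ k := by exact_mod_cast hgt
      nlinarith
  rw [hk0] at him
  simp at him
  linarith

lemma unit_det_one_sub_smul {n : ℕ} (A : Matrix (Fin n) (Fin n) ℂ)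
    (hA : ∀ z ∈ spectrum ℂ A, ‖z‖ < 1) (z : ℂ) (hz : ‖z‖ = 1) :
    IsUnit ((1 : Matrix (Fin n) (Fin n) ℂ) - z • A).det := by
  have hz0 : z ≠ 0 := by intro h; rw [h] at hz; simp at hz
  have hspec : z⁻¹ ∉ spectrum ℂ A := by
    intro hmem
    have := hA _ hmem
    rw [norm_inv, hz] at this; norm_num at this
  rw [spectrum.mem_iff, not_not] at hspec
  have key : (1 : Matrix (Fin n) (Fin n) ℂ) - z • A
      = z • ((algebraMap ℂ (Matrix (Fin n) (Fin n) ℂ)) z⁻¹ - A) := by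
    rw [smul_sub]
    congr 1
    rw [Algebra.algebraMap_eq_smul_one, smul_smul, mul_inv_cancel₀ hz0, one_smul]
  rw [key, Matrix.det_smul]
  have hdet : IsUnit ((algebraMap ℂ (Matrix (Fin n) (Fin n) ℂ)) z⁻¹ - A).det :=
    (Matrix.isUnit_iff_isUnit_det _).mp hspec
  exact (IsUnit.pow (Fintype.card (Fin n)) (isUnit_iff_ne_zero.mpr hz0)).mul hdet


lemma sum_mulVec' {n : ℕ} {ι : Type*} {s : Finset ι} (N : ι → Matrix (Fin n) (Fin n) ℂ)
    (v : Fin n → ℂ) :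
    (∑ k ∈ s, N k) *ᵥ v = ∑ k ∈ s, N k *ᵥ v := by
  funext i
  simp only [Matrix.mulVec, dotProduct, Finset.sum_apply, Finset.sum_mul]
  rw [Finset.sum_comm]
  congr 1; funext j
  rw [Matrix.sum_apply, Finset.sum_mul]

lemma mulVec_sum_smul {n m : ℕ} (M : Matrix (Fin n) (Fin n) ℂ) (c : Fin m → ℂ)
    (v : Fin m → Fin n → ℂ) :
    M *ᵥ (∑ k, c k • v k) = ∑ k, c k • (M *ᵥ v k) := by
  rw [show M *ᵥ (∑ k, c k • v k) = M.mulVecLin (∑ k, c k • v k) from (Matrix.mulVecLin_apply _ _).symm]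
  rw [map_sum]
  simp [Matrix.mulVecLin_apply]

noncomputable def Gv {n : ℕ} (A : Matrix (Fin n) (Fin n) ℂ) (b : Fin n → ℂ) (θ : ℝ) :
    Fin n → ℂ :=
  ((1 : Matrix (Fin n) (Fin n) ℂ) - Complex.exp (-(θ : ℂ) * Complex.I) • A)⁻¹ *ᵥ b

def SchurStable {n : ℕ} (A : Matrix (Fin n) (Fin n) ℂ) : Prop :=
  ∀ z ∈ spectrum ℂ A, ‖z‖ < 1

def Reachable {n : ℕ} (A : Matrix (Fin n) (Fin n) ℂ) (b : Fin n → ℂ) : Prop :=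
  Submodule.span ℂ (Set.range fun k : Fin n => (A ^ (k : ℕ)) *ᵥ b) = ⊤

theorem stmt0 {n m : ℕ} (A : Matrix (Fin n) (Fin n) ℂ) (b : Fin n → ℂ)
    (hA : SchurStable A) (hreach : Reachable A b) (hm : m ≤ n)
    (θ : Fin m → ℝ) (hθ : ∀ k, θ k ∈ Set.Ico (0 : ℝ) (2 * Real.pi))
    (hinj : Function.Injective θ) :
    LinearIndependent ℂ (fun k : Fin m => Gv A b (θ k)) := by
  rcases Nat.eq_zero_or_pos m with hm0 | hmpos
  · subst hm0; exact linearIndependent_empty_type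
  have hn : 0 < n := lt_of_lt_of_le hmpos hm
  have hli : LinearIndependent ℂ (fun k : Fin n => (A ^ (k : ℕ)) *ᵥ b) :=
    linearIndependent_of_top_le_span_of_card_eq_finrank (le_of_eq hreach.symm)
      (by simp [Module.finrank_fin_fun])
  set z : Fin m → ℂ := fun k => Complex.exp (-(θ k : ℂ) * Complex.I) with hzdef
  have hznorm : ∀ k, ‖z k‖ = 1 := by
    intro k
    simp only [hzdef]
    rw [Complex.norm_exp]
    simp
  have hz0 : ∀ k, z k ≠ 0 := fun k => Complex.exp_ne_zero _
  have hzinj : Function.Injective z := by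
    intro j l h
    exact hinj (exp_theta_inj (hθ j) (hθ l) h)
  set M : Fin m → Matrix (Fin n) (Fin n) ℂ := fun k => 1 - z k • A with hMdef
  have hMdet : ∀ k, IsUnit (M k).det := fun k => unit_det_one_sub_smul A hA _ (hznorm k)
  set f : Fin m → ℂ[X] := fun k => 1 - C (z k) * X with hfdef
  have hfa : ∀ k, aeval A (f k) = M k := by
    intro k
    simp [hfdef, hMdef, Algebra.smul_def]
  rw [Fintype.linearIndependent_iff]
  intro c hc k0
  set p : Fin m → ℂ[X] := fun k => ∏ j ∈ Finset.univ.erase k, f j with hpdef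
  set q : ℂ[X] := ∑ k, C (c k) * p k with hqdef
  have hGv : ∀ k, Gv A b (θ k) = (M k)⁻¹ *ᵥ b := fun k => rfl
  -- Step 1: q(A) b = 0
  have key : (aeval A q) *ᵥ b = 0 := by
    have h1 : ∀ k, (aeval A (∏ j, f j)) *ᵥ ((M k)⁻¹ *ᵥ b) = (aeval A (p k)) *ᵥ b := by
      intro k
      rw [Matrix.mulVec_mulVec]
      congr 1
      have hsplit : (∏ j, f j) = f k * p k :=
        (Finset.mul_prod_erase _ _ (Finset.mem_univ k)).symm
      rw [hsplit, _root_.map_mul, hfa]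
      have hcomm : Commute (M k) (aeval A (p k)) := by
        rw [← hfa]; exact (Commute.all (f k) (p k)).map (aeval A).toRingHom
      rw [hcomm.eq, mul_assoc, Matrix.mul_nonsing_inv _ (hMdet k), mul_one]
    have h2 : (aeval A q) *ᵥ b = ∑ k, c k • ((aeval A (p k)) *ᵥ b) := by
      rw [hqdef, map_sum, sum_mulVec']
      congr 1
      funext k
      rw [_root_.map_mul, aeval_C, ← Algebra.smul_def, Matrix.smul_mulVec]
    have h3 : (0 : Fin n → ℂ) = (aeval A (∏ j, f j)) *ᵥ (∑ k, c k • ((M k)⁻¹ *ᵥ b)) := by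
      have : (∑ k, c k • ((M k)⁻¹ *ᵥ b)) = 0 := by
        rw [← hc]
        exact Finset.sum_congr rfl fun i _ => by rw [hGv]
      rw [this, Matrix.mulVec_zero]
    rw [h2]
    rw [h3]
    rw [show (aeval A (∏ j, f j)) *ᵥ (∑ k, c k • ((M k)⁻¹ *ᵥ b))
        = ∑ k, c k • ((aeval A (∏ j, f j)) *ᵥ ((M k)⁻¹ *ᵥ b)) by
      rw [mulVec_sum_smul]]
    simp only [h1]
  -- Step 2: q = 0
  have hdeg : q.natDegree < n := by
    have h1 : ∀ j, (f j).natDegree ≤ 1 := by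
      intro j
      rw [hfdef]
      refine le_trans (natDegree_sub_le _ _) ?_
      simp only [natDegree_one, max_le_iff]
      exact ⟨Nat.zero_le _, le_trans (natDegree_C_mul_le _ _) (le_of_eq natDegree_X)⟩
    have h2 : ∀ k, (p k).natDegree ≤ m - 1 := by
      intro k
      refine le_trans (natDegree_prod_le _ _) ?_
      calc ∑ j ∈ Finset.univ.erase k, (f j).natDegree
          ≤ ∑ j ∈ Finset.univ.erase k, 1 := Finset.sum_le_sum (fun j _ => h1 j)
        _ = (Finset.univ.erase k).card := by simp
        _ = m - 1 := by simp [Finset.card_erase_of_mem]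
    have h3 : q.natDegree ≤ m - 1 := by
      rw [hqdef]
      refine natDegree_sum_le_of_forall_le _ _ (fun k _ => ?_)
      exact le_trans (natDegree_C_mul_le _ _) (h2 k)
    omega
  have hcoeff : ∀ i : Fin n, q.coeff (i : ℕ) = 0 := by
    have hrep : (aeval A q) *ᵥ b = ∑ i : Fin n, q.coeff (i : ℕ) • ((A ^ (i : ℕ)) *ᵥ b) := by
      conv_lhs => rw [as_sum_range' q n hdeg]
      rw [map_sum, Finset.sum_congr rfl
        (fun i _ => by rw [aeval_monomial, ← Algebra.smul_def] :
          ∀ i ∈ Finset.range n, aeval A (monomial i (q.coeff i)) = q.coeff i • A ^ i)]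
      rw [sum_mulVec']
      rw [← Fin.sum_univ_eq_sum_range (fun i => (q.coeff i • A ^ i) *ᵥ b) n]
      exact Finset.sum_congr rfl (fun i _ => Matrix.smul_mulVec _ _ _)
    intro i
    exact Fintype.linearIndependent_iff.mp hli _ (by rw [← hrep]; exact key) i
  have hq0 : q = 0 := by
    ext i
    simp only [coeff_zero]
    by_cases hi : i < n
    · exact hcoeff ⟨i, hi⟩
    · exact coeff_eq_zero_of_natDegree_lt (lt_of_lt_of_le hdeg (not_lt.mp hi))
  -- Step 3: evaluate at (z k0)⁻¹
  have hfe : ∀ j (w : ℂ), (f j).eval w = 1 - z j * w := by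
    intro j w; simp [hfdef]
  have hpk0 : (p k0).eval ((z k0)⁻¹) ≠ 0 := by
    rw [hpdef]
    simp only
    rw [eval_prod]
    rw [Finset.prod_ne_zero_iff]
    intro j hj
    rw [hfe]
    intro hzero
    have : z j * (z k0)⁻¹ = 1 := by linear_combination -hzero
    rw [mul_inv_eq_one₀ (hz0 k0)] at this
    exact (Finset.mem_erase.mp hj).1 (hzinj this)
  have heval : q.eval ((z k0)⁻¹) = c k0 * (p k0).eval ((z k0)⁻¹) := by
    rw [hqdef, eval_finset_sum]
    rw [Finset.sum_eq_single k0]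
    · rw [eval_mul, eval_C]
    · intro k _ hk
      rw [eval_mul, eval_C, hpdef]
      simp only
      rw [eval_prod]
      rw [Finset.prod_eq_zero (Finset.mem_erase.mpr ⟨Ne.symm hk, Finset.mem_univ k0⟩)]
      · ring
      · rw [hfe, mul_inv_cancel₀ (hz0 k0), sub_self]
    · intro h; exact absurd (Finset.mem_univ k0) h
  rw [hq0, eval_zero] at heval
  exact ((mul_eq_zero.mp heval.symm).resolve_right hpk0)
end

section
/- Let (A,b) be a reachable pair with A Schur stable, and G(θ) = (I − e^{−iθ}A)^{−1}b. Suppose a positive semidefinite n×n Hermitian matrix Σ admits two decompositions Σ = Σ_{k=1}^r ρ_k G(θ_k)G(θ_k)* = Σ_{k=1}^r ρ'_k G(θ'_k)G(θ'_k)*, where r < n, all ρ_k, ρ'_k > 0, the θ_k are pairwise distinct, and the θ'_k are pairwise distinct. Then the multiset {(θ_k, ρ_k)} equals the multiset {(θ'_k, ρ'_k)}. -/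
open Matrix
open scoped ComplexOrder

section Aux

open Polynomial

lemma unit_det {n : ℕ} {A : Matrix (Fin n) (Fin n) ℂ} (hA : SchurStable A)
    {z : ℂ} (hz : ‖z‖ = 1) :
    IsUnit ((1 : Matrix (Fin n) (Fin n) ℂ) - z • A).det := by
  have hz0 : z ≠ 0 := by intro h; simp [h] at hz
  have hinv : ‖z⁻¹‖ = 1 := by rw [norm_inv, hz]; norm_num
  have hns : z⁻¹ ∉ spectrum ℂ A := by
    intro h; have := hA _ h; rw [hinv] at this; exact lt_irrefl _ this
  rw [spectrum.notMem_iff] at hns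
  have : (1 : Matrix (Fin n) (Fin n) ℂ) - z • A = z • ((algebraMap ℂ _) z⁻¹ - A) := by
    rw [smul_sub]
    congr 1
    · rw [Algebra.algebraMap_eq_smul_one, smul_smul, mul_inv_cancel₀ hz0, one_smul]
  rw [this]
  have h1 : z • ((algebraMap ℂ (Matrix (Fin n) (Fin n) ℂ)) z⁻¹ - A)
      = ((algebraMap ℂ (Matrix (Fin n) (Fin n) ℂ)) z) * ((algebraMap ℂ _) z⁻¹ - A) := by
    simp [Algebra.algebraMap_eq_smul_one, Matrix.smul_mul]
  rw [h1, ← Matrix.isUnit_iff_isUnit_det]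
  exact (IsUnit.map (algebraMap ℂ (Matrix (Fin n) (Fin n) ℂ)) (isUnit_iff_ne_zero.mpr hz0)).mul hns

lemma indep_aux {n m : ℕ} {A : Matrix (Fin n) (Fin n) ℂ} {b : Fin n → ℂ}
    (hreach : Reachable A b) (hm : m ≤ n) (z : Fin m → ℂ)
    (hzne : ∀ k, z k ≠ 0) (hz : Function.Injective z)
    (hu : ∀ k, IsUnit ((1 : Matrix (Fin n) (Fin n) ℂ) - z k • A).det) :
    LinearIndependent ℂ (fun k => ((1 : Matrix (Fin n) (Fin n) ℂ) - z k • A)⁻¹ *ᵥ b) := by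
  have hb : LinearIndependent ℂ (fun i : Fin n => (A ^ (i : ℕ)) *ᵥ b) := by
    apply linearIndependent_of_top_le_span_of_card_eq_finrank
    · rw [hreach]
    · simp
  set v : Fin m → (Fin n → ℂ) := fun k => ((1 : Matrix (Fin n) (Fin n) ℂ) - z k • A)⁻¹ *ᵥ b with hv
  rw [Fintype.linearIndependent_iff]
  intro c hc l
  have hm1 : 1 ≤ m := Nat.one_le_iff_ne_zero.mpr (by rintro rfl; exact l.elim0)
  set qq : Fin m → ℂ[X] := fun k => ∏ j ∈ Finset.univ.erase k, (1 - C (z j) * X) with hqq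
  set P : ℂ[X] := ∏ j, (1 - C (z j) * X) with hP
  have hlin : ∀ k, aeval A (1 - C (z k) * X) = 1 - z k • A := by
    intro k
    simp [Algebra.algebraMap_eq_smul_one, Matrix.smul_mul]
  have sum_mulVec : ∀ (M : Fin n → Matrix (Fin n) (Fin n) ℂ) (s : Finset (Fin n)) (w : Fin n → ℂ),
      (∑ k ∈ s, M k) *ᵥ w = ∑ k ∈ s, M k *ᵥ w := by
    intro M s w
    induction s using Finset.induction with
    | empty => simp
    | insert _ _ h ih => rw [Finset.sum_insert h, Finset.sum_insert h, Matrix.add_mulVec, ih]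
  have sum_mulVec' : ∀ (M : Fin m → Matrix (Fin n) (Fin n) ℂ) (w : Fin n → ℂ),
      (∑ k, M k) *ᵥ w = ∑ k, M k *ᵥ w := by
    intro M w
    induction (Finset.univ : Finset (Fin m)) using Finset.induction with
    | empty => simp
    | insert _ _ h ih => rw [Finset.sum_insert h, Finset.sum_insert h, Matrix.add_mulVec, ih]
  have key : ∀ k, (aeval A (qq k)) *ᵥ b = (aeval A P) *ᵥ (v k) := by
    intro k
    have hsplit : P = qq k * (1 - C (z k) * X) :=
      (Finset.prod_erase_mul _ _ (Finset.mem_univ k)).symm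
    rw [hsplit, _root_.map_mul, hlin k, Matrix.mulVec_mulVec, Matrix.mul_assoc,
      Matrix.mul_nonsing_inv _ (hu k), Matrix.mul_one]
  set q : ℂ[X] := ∑ k, c k • qq k with hq
  have hq0 : (aeval A q) *ᵥ b = 0 := by
    have e1 : (aeval A q) *ᵥ b = ∑ k, c k • ((aeval A (qq k)) *ᵥ b) := by
      rw [hq, map_sum, sum_mulVec']
      congr 1; ext k
      rw [_root_.map_smul, Matrix.smul_mulVec]
    rw [e1]
    simp_rw [key]
    have e2 : ∑ k, c k • ((aeval A P) *ᵥ (v k)) = (aeval A P) *ᵥ (∑ k, c k • v k) := by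
      simp_rw [← Matrix.mulVecLin_apply, ← _root_.map_smul, ← map_sum]
    rw [e2, hc, Matrix.mulVec_zero]
  have hdegk : ∀ k, (qq k).natDegree ≤ m - 1 := by
    intro k
    refine (natDegree_prod_le _ _).trans ?_
    calc ∑ j ∈ Finset.univ.erase k, (1 - C (z j) * X).natDegree
        ≤ ∑ j ∈ Finset.univ.erase k, 1 := by
          refine Finset.sum_le_sum fun j _ => ?_
          refine (natDegree_sub_le _ _).trans ?_
          simp only [natDegree_one]
          exact max_le (Nat.zero_le _) ((natDegree_C_mul_le _ _).trans (by simp))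
      _ = m - 1 := by simp [Finset.card_erase_of_mem]
  have hdeg : q.natDegree < n := by
    have : q.natDegree ≤ m - 1 := by
      refine natDegree_sum_le_of_forall_le _ _ fun k _ => ?_
      exact (natDegree_smul_le _ _).trans (hdegk k)
    omega
  have hcoeff : ∀ i : Fin n, q.coeff i = 0 := by
    have e3 : aeval A q = ∑ i ∈ Finset.range n, q.coeff i • A ^ i := aeval_eq_sum_range' hdeg A
    rw [e3] at hq0
    rw [show (∑ i ∈ Finset.range n, q.coeff i • A ^ i) = ∑ i : Fin n, q.coeff (i : ℕ) • A ^ (i : ℕ) from (Fin.sum_univ_eq_sum_range (fun i => q.coeff i • A ^ i) n).symm, sum_mulVec _ Finset.univ] at hq0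
    simp_rw [Matrix.smul_mulVec] at hq0
    exact Fintype.linearIndependent_iff.mp hb (fun i => q.coeff (i : ℕ)) hq0
  have hqzero : q = 0 := by
    ext i
    rcases lt_or_ge i n with h | h
    · exact hcoeff ⟨i, h⟩
    · exact coeff_eq_zero_of_natDegree_lt (lt_of_lt_of_le hdeg h)
  have heval : eval (z l)⁻¹ q = 0 := by rw [hqzero]; simp
  have hevalsum : eval (z l)⁻¹ q = ∑ k, c k * eval (z l)⁻¹ (qq k) := by
    rw [hq]; simp [eval_finset_sum]
  have hzeroterm : ∀ k, k ≠ l → eval (z l)⁻¹ (qq k) = 0 := by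
    intro k hkl
    rw [hqq]
    simp only [eval_prod]
    apply Finset.prod_eq_zero (Finset.mem_erase.mpr ⟨fun h => hkl h.symm, Finset.mem_univ l⟩)
    · simp [mul_inv_cancel₀ (hzne l)]
  have hnonzero : eval (z l)⁻¹ (qq l) ≠ 0 := by
    rw [hqq]
    simp only [eval_prod]
    apply Finset.prod_ne_zero_iff.mpr
    intro j hj
    simp only [eval_sub, eval_one, eval_mul, eval_C, eval_X]
    intro h
    have : z j * (z l)⁻¹ = 1 := by linear_combination -h
    have h2 : z j = z l := by
      have h3 := congrArg (· * z l) this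
      simpa [mul_assoc, inv_mul_cancel₀ (hzne l)] using h3
    exact (Finset.mem_erase.mp hj).1 (hz h2)
  rw [hevalsum, Finset.sum_eq_single l (fun k _ hk => by rw [hzeroterm k hk, mul_zero]) (by simp)] at heval
  exact (mul_eq_zero.mp heval).resolve_right hnonzero

lemma dual_exists {n : ℕ} (p : Submodule ℂ (Fin n → ℂ)) (x : Fin n → ℂ) (hx : x ∉ p) :
    ∃ w : Fin n → ℂ, (∀ y ∈ p, star y ⬝ᵥ w = 0) ∧ star x ⬝ᵥ w = 1 := by
  obtain ⟨f0, hf1, hf2⟩ := p.exists_dual_map_eq_bot_of_notMem hx inferInstance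
  have hf0 : ∀ y ∈ p, f0 y = 0 := by
    intro y hy
    have := hf2 ▸ Submodule.mem_map_of_mem (f := f0) hy
    simpa using this
  set f : Module.Dual ℂ (Fin n → ℂ) := (f0 x)⁻¹ • f0 with hf
  have hfx : f x = 1 := by simp [hf, inv_mul_cancel₀ hf1]
  have hfp : ∀ y ∈ p, f y = 0 := by intro y hy; simp [hf, hf0 y hy]
  have hdot : ∀ y : Fin n → ℂ,
      star y ⬝ᵥ (fun i => starRingEnd ℂ (f (Pi.single i (1:ℂ)))) = starRingEnd ℂ (f y) := by
    intro y
    have hy : f y = ∑ i, y i * f (Pi.single i (1:ℂ)) := by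
      conv_lhs => rw [← Finset.univ_sum_single y]
      rw [map_sum]
      congr 1; ext i
      have h1 : (Pi.single i (y i) : Fin n → ℂ) = y i • (Pi.single i 1 : Fin n → ℂ) := by
        ext j
        by_cases hj : j = i <;> simp [Pi.single_apply, hj]
      rw [h1, _root_.map_smul, smul_eq_mul]
    rw [hy, map_sum, dotProduct]
    congr 1; ext i
    simp [mul_comm]
  refine ⟨fun i => starRingEnd ℂ (f (Pi.single i (1:ℂ))), ?_, ?_⟩
  · intro y hy; rw [hdot, hfp y hy]; simp
  · rw [hdot, hfx]; simp

lemma quad_form {n m : ℕ} (v : Fin m → Fin n → ℂ) (c : Fin m → ℝ) (w : Fin n → ℂ) :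
    star w ⬝ᵥ ((∑ k, (c k : ℂ) • vecMulVec (v k) (star (v k))) *ᵥ w)
      = ∑ k, ((c k : ℂ) * (Complex.normSq (star (v k) ⬝ᵥ w) : ℝ)) := by
  have hmv : ∀ k, (vecMulVec (v k) (star (v k))) *ᵥ w = (star (v k) ⬝ᵥ w) • (v k) := by
    intro k
    ext i
    simp [vecMulVec, mulVec, dotProduct, Finset.mul_sum, mul_assoc, mul_comm, mul_left_comm]
  have hsum : (∑ k, (c k : ℂ) • vecMulVec (v k) (star (v k))) *ᵥ w
      = ∑ k, (c k : ℂ) • ((vecMulVec (v k) (star (v k))) *ᵥ w) := by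
    induction (Finset.univ : Finset (Fin m)) using Finset.induction with
    | empty => simp
    | insert _ _ h ih => rw [Finset.sum_insert h, Finset.sum_insert h, Matrix.add_mulVec, ih,
        Matrix.smul_mulVec]
  have dsum : ∀ (u : Fin n → ℂ) (g : Fin m → Fin n → ℂ), u ⬝ᵥ (∑ k, g k) = ∑ k, u ⬝ᵥ g k := by
    intro u g
    simp only [dotProduct, Finset.sum_apply, Finset.mul_sum]
    exact Finset.sum_comm
  have hconj : ∀ (u : Fin n → ℂ), star w ⬝ᵥ u = starRingEnd ℂ (star u ⬝ᵥ w) := by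
    intro u
    simp [dotProduct, map_sum, mul_comm]
  rw [hsum, dsum]
  congr 1; ext k
  rw [hmv k, dotProduct_smul, dotProduct_smul, hconj (v k), smul_eq_mul, smul_eq_mul,
    Complex.mul_conj]

lemma theta_exp_inj {a c : ℝ} (ha : a ∈ Set.Ico (0:ℝ) (2*Real.pi)) (hc : c ∈ Set.Ico (0:ℝ) (2*Real.pi))
    (h : Complex.exp (-(a:ℂ) * Complex.I) = Complex.exp (-(c:ℂ) * Complex.I)) : a = c := by
  rw [Complex.exp_eq_exp_iff_exists_int] at h
  obtain ⟨k, hk⟩ := h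
  have him := congrArg Complex.im hk
  simp [Complex.add_im, Complex.mul_im] at him
  have hπ := Real.pi_pos
  obtain ⟨ha0, ha2⟩ := ha
  obtain ⟨hc0, hc2⟩ := hc
  have hk0 : k = 0 := by
    rcases lt_trichotomy k 0 with h' | h' | h'
    · have hk1 : (k : ℝ) ≤ -1 := by exact_mod_cast (by omega : k ≤ -1)
      nlinarith
    · exact h'
    · have hk1 : (1 : ℝ) ≤ (k : ℝ) := by exact_mod_cast h'
      nlinarith
  rw [hk0] at him
  push_cast at him
  linarith

end Aux

theorem stmt1 {n r : ℕ} (A : Matrix (Fin n) (Fin n) ℂ) (b : Fin n → ℂ)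
    (hA : SchurStable A) (hreach : Reachable A b) (hr : r < n)
    (Sig : Matrix (Fin n) (Fin n) ℂ) (hSig : Sig.PosSemidef)
    (θ θ' : Fin r → ℝ) (ρ ρ' : Fin r → ℝ)
    (hθmem : ∀ k, θ k ∈ Set.Ico (0 : ℝ) (2 * Real.pi))
    (hθ'mem : ∀ k, θ' k ∈ Set.Ico (0 : ℝ) (2 * Real.pi))
    (hρ : ∀ k, 0 < ρ k) (hρ' : ∀ k, 0 < ρ' k)
    (hθ : Function.Injective θ) (hθ' : Function.Injective θ')
    (hdec : Sig = ∑ k, (ρ k : ℂ) • vecMulVec (Gv A b (θ k)) (star (Gv A b (θ k))))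
    (hdec' : Sig = ∑ k, (ρ' k : ℂ) • vecMulVec (Gv A b (θ' k)) (star (Gv A b (θ' k)))) :
    Multiset.map (fun k => (θ k, ρ k)) Finset.univ.val
      = Multiset.map (fun k => (θ' k, ρ' k)) Finset.univ.val := by
  classical
  have hnorm : ∀ t : ℝ, ‖Complex.exp (-(t:ℂ) * Complex.I)‖ = 1 := by
    intro t
    rw [Complex.norm_exp]
    simp
  have hind : ∀ (m : ℕ), m ≤ n → ∀ (ψ : Fin m → ℝ), (∀ k, ψ k ∈ Set.Ico (0:ℝ) (2*Real.pi)) →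
      Function.Injective ψ → LinearIndependent ℂ (fun k => Gv A b (ψ k)) := by
    intro m hm ψ hmem hinj
    exact indep_aux hreach hm (fun k => Complex.exp (-(ψ k : ℂ) * Complex.I))
      (fun k => Complex.exp_ne_zero _)
      (fun a c h => hinj (theta_exp_inj (hmem a) (hmem c) h))
      (fun k => unit_det hA (hnorm _))
  -- Step A: each Gv (θ' j) lies in span of the Gv (θ k)
  have hspanA : ∀ j, Gv A b (θ' j) ∈ Submodule.span ℂ (Set.range fun k => Gv A b (θ k)) := by
    intro j
    by_contra hnot
    obtain ⟨w, hw0, hw1⟩ := dual_exists _ _ hnot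
    have h1 : star w ⬝ᵥ (Sig *ᵥ w) = 0 := by
      rw [hdec, quad_form]
      apply Finset.sum_eq_zero
      intro k _
      rw [hw0 _ (Submodule.subset_span ⟨k, rfl⟩)]
      simp
    rw [hdec', quad_form] at h1
    have hreal : ∑ k, (ρ' k * Complex.normSq (star (Gv A b (θ' k)) ⬝ᵥ w)) = 0 := by
      have h2 : ((∑ k, ρ' k * Complex.normSq (star (Gv A b (θ' k)) ⬝ᵥ w) : ℝ) : ℂ) = 0 := by
        push_cast
        exact h1
      exact_mod_cast h2
    have hterm : ∀ k ∈ Finset.univ, (0:ℝ) ≤ ρ' k * Complex.normSq (star (Gv A b (θ' k)) ⬝ᵥ w) :=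
      fun k _ => mul_nonneg (hρ' k).le (Complex.normSq_nonneg _)
    have hj : ρ' j * Complex.normSq (star (Gv A b (θ' j)) ⬝ᵥ w) = ρ' j := by
      rw [hw1]; simp
    have := Finset.single_le_sum hterm (Finset.mem_univ j)
    rw [hj, hreal] at this
    exact absurd this (not_le.mpr (hρ' j))
  -- Step B: each θ' j equals some θ k
  have hmemθ : ∀ j, ∃ k, θ' j = θ k := by
    intro j
    by_contra hne'
    push_neg at hne'
    set ψ : Fin (r+1) → ℝ := Fin.snoc θ (θ' j) with hψ
    have hψc : ∀ k : Fin r, ψ k.castSucc = θ k := fun k => Fin.snoc_castSucc _ _ _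
    have hψl : ψ (Fin.last r) = θ' j := Fin.snoc_last _ _
    have hψmem : ∀ i, ψ i ∈ Set.Ico (0:ℝ) (2*Real.pi) := by
      intro i
      rcases Fin.eq_castSucc_or_eq_last i with ⟨i', rfl⟩ | rfl
      · rw [hψc]; exact hθmem i'
      · rw [hψl]; exact hθ'mem j
    have hψinj : Function.Injective ψ := by
      intro a c hac
      rcases Fin.eq_castSucc_or_eq_last a with ⟨a', rfl⟩ | rfl <;>
        rcases Fin.eq_castSucc_or_eq_last c with ⟨c', rfl⟩ | rfl
      · rw [hψc, hψc] at hac; exact congrArg _ (hθ hac)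
      · rw [hψc, hψl] at hac; exact absurd hac.symm (hne' a')
      · rw [hψl, hψc] at hac; exact absurd hac (hne' c')
      · rfl
    have hindep := hind (r+1) hr ψ hψmem hψinj
    have hnotmem := hindep.notMem_span_image
      (s := {i : Fin (r+1) | i ≠ Fin.last r}) (x := Fin.last r) (by simp)
    apply hnotmem
    rw [hψl]
    refine Submodule.span_mono ?_ (hspanA j)
    rintro y ⟨k, rfl⟩
    exact ⟨k.castSucc, (Fin.castSucc_lt_last k).ne, congrArg (Gv A b) (hψc k)⟩
  -- Step C: bijection
  choose σ hσ using hmemθ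
  have hσinj : Function.Injective σ := by
    intro a c h
    apply hθ'
    rw [hσ a, hσ c, h]
  obtain ⟨e, he⟩ : ∃ e : Fin r ≃ Fin r, ∀ j, e j = σ j :=
    ⟨Equiv.ofBijective σ (Finite.injective_iff_bijective.mp hσinj), fun j => rfl⟩
  -- Step D: matching coefficients
  have hVind := hind r hr.le θ hθmem hθ
  have hcoeffmatch : ∀ l : Fin r, ρ l = ρ' (e.symm l) := by
    intro l
    have hnotl : Gv A b (θ l) ∉
        Submodule.span ℂ ((fun k => Gv A b (θ k)) '' {i : Fin r | i ≠ l}) :=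
      hVind.notMem_span_image (by simp)
    obtain ⟨w, hw0, hw1⟩ := dual_exists _ _ hnotl
    have hwk : ∀ k, k ≠ l → star (Gv A b (θ k)) ⬝ᵥ w = 0 := fun k hk =>
      hw0 _ (Submodule.subset_span ⟨k, hk, rfl⟩)
    have q1 : star w ⬝ᵥ (Sig *ᵥ w) = (ρ l : ℂ) := by
      rw [hdec, quad_form, Finset.sum_eq_single l]
      · rw [hw1]; simp
      · intro k _ hk; rw [hwk k hk]; simp
      · intro h; exact absurd (Finset.mem_univ l) h
    have q2 : star w ⬝ᵥ (Sig *ᵥ w) = (ρ' (e.symm l) : ℂ) := by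
      rw [hdec', quad_form, Finset.sum_eq_single (e.symm l)]
      · have hθeq : θ' (e.symm l) = θ l := by
          rw [hσ (e.symm l), ← he (e.symm l), e.apply_symm_apply]
        rw [hθeq, hw1]; simp
      · intro k _ hk
        have hθk : θ' k = θ (σ k) := hσ k
        have hσkl : σ k ≠ l := by
          intro h
          exact hk (hσinj (by rw [h, ← he (e.symm l), e.apply_symm_apply]))
        rw [hθk, hwk (σ k) hσkl]
        simp
      · intro h; exact absurd (Finset.mem_univ _) h
    have : (ρ l : ℂ) = (ρ' (e.symm l) : ℂ) := q1.symm.trans q2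
    exact_mod_cast this
  -- Final multiset equality
  have hfinal : ∀ j, (θ' j, ρ' j) = (θ (σ j), ρ (σ j)) := by
    intro j
    have h1 : θ' j = θ (σ j) := hσ j
    have h2 : ρ' j = ρ (σ j) := by
      have h3 := hcoeffmatch (σ j)
      rw [show e.symm (σ j) = j from by rw [← he j, e.symm_apply_apply]] at h3
      exact h3.symm
    rw [h1, h2]
  have hre : Multiset.map (fun k => (θ k, ρ k)) Finset.univ.val
      = Multiset.map (fun j => (θ (σ j), ρ (σ j))) Finset.univ.val := by
    conv_lhs => rw [← Finset.univ_map_equiv_to_embedding e]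
    rw [Finset.map_val, Multiset.map_map]
    exact Multiset.map_congr rfl (fun j _ => by simp [Function.comp, he j])
  rw [hre]
  exact (Multiset.map_congr rfl (fun j _ => (hfinal j))).symm
end

section
/- Let x = Σ_{k=1}^m G(θ_k) c_k with c_k ∈ ℂ nonzero and θ_k pairwise distinct. Define τ = Σ_k |c_k| ‖G(θ_k)‖ and Σ = Σ_k (|c_k|/‖G(θ_k)‖) G(θ_k) G(θ_k)*. Then trace(Σ) = τ and the block matrix [[τ, x*],[x, Σ]] is positive semidefinite. -/
open Matrix
open scoped ComplexOrder

/-- Euclidean norm on ℂⁿ. -/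
noncomputable def enormEuc {n : ℕ} (v : Fin n → ℂ) : ℝ :=
  Real.sqrt (∑ i, Complex.normSq (v i))

/-- The block matrix [[τ, x*],[x, Σ]]. -/
def blockM {n : ℕ} (τ : ℝ) (x : Fin n → ℂ) (S : Matrix (Fin n) (Fin n) ℂ) :
    Matrix (Unit ⊕ Fin n) (Unit ⊕ Fin n) ℂ :=
  Matrix.fromBlocks (Matrix.of fun _ _ => (τ : ℂ)) (Matrix.of fun _ j => star (x j))
    (Matrix.of fun i _ => x i) S

lemma psd_outer {N : Type*} [Fintype N] [DecidableEq N] (v : N → ℂ) :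
    (vecMulVec v (star v)).PosSemidef := by
  constructor
  · ext i j
    simp [Matrix.conjTranspose_apply, vecMulVec_apply, mul_comm]
  · intro y
    have h : star y ⬝ᵥ (vecMulVec v (star v) *ᵥ y) =
        star (star v ⬝ᵥ y) * (star v ⬝ᵥ y) := by
      simp only [dotProduct, mulVec, vecMulVec_apply, Pi.star_apply, star_sum, star_mul',
        star_star, Finset.mul_sum, Finset.sum_mul]
      rw [Finset.sum_comm]
      congr 1; ext i; congr 1; ext j; ring
    exact (Matrix.posSemidef_vecMulVec_self_star v).2 y

lemma enormEuc_pos {n : ℕ} {v : Fin n → ℂ} (h : v ≠ 0) : 0 < enormEuc v := by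
  obtain ⟨i, hi⟩ := Function.ne_iff.mp h
  apply Real.sqrt_pos.mpr
  apply Finset.sum_pos' (fun j _ => Complex.normSq_nonneg _)
  exact ⟨i, Finset.mem_univ i, Complex.normSq_pos.mpr hi⟩

lemma enorm_sq {n : ℕ} (v : Fin n → ℂ) : ∑ i, Complex.normSq (v i) = enormEuc v ^ 2 := by
  rw [enormEuc, Real.sq_sqrt (Finset.sum_nonneg fun j _ => Complex.normSq_nonneg _)]


lemma scal1 (a z w : ℂ) (ha : a ≠ 0) : a * (z / a * w) = z * w := by
  field_simp

lemma scal2 (a z w : ℂ) (ha : a ≠ 0) : z / a * w * a = z * w := by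
  field_simp

lemma scal3 (cc : ℂ) (aa rr : ℝ) (hcc0 : cc ≠ 0) (ha : aa ≠ 0) (hrr : rr ≠ 0)
    (h : aa ^ 2 = ‖cc‖ * rr) (z w : ℂ) :
    cc / (aa : ℂ) * z * ((starRingEnd ℂ) cc / (aa : ℂ) * w) =
      ((‖cc‖ / rr : ℝ) : ℂ) * (z * w) := by
  have hcc : cc * (starRingEnd ℂ) cc = ((‖cc‖ : ℝ) : ℂ) ^ 2 := by
    rw [Complex.mul_conj, Complex.normSq_eq_norm_sq]
    push_cast; ring
  have h2 : ((aa : ℝ) : ℂ) ^ 2 = ((‖cc‖ : ℝ) : ℂ) * ((rr : ℝ) : ℂ) := by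
    exact_mod_cast congrArg (fun t : ℝ => (t : ℂ)) h
  have ha' : ((aa : ℝ) : ℂ) ≠ 0 := Complex.ofReal_ne_zero.mpr ha
  have hr' : ((rr : ℝ) : ℂ) ≠ 0 := Complex.ofReal_ne_zero.mpr hrr
  have hn : ((‖cc‖ : ℝ) : ℂ) ≠ 0 := Complex.ofReal_ne_zero.mpr (norm_ne_zero_iff.mpr hcc0)
  have step : cc / (aa : ℂ) * z * ((starRingEnd ℂ) cc / (aa : ℂ) * w) =
      (cc * (starRingEnd ℂ) cc) / (((aa : ℝ) : ℂ) ^ 2) * (z * w) := by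
    field_simp
  rw [step, hcc, h2, Complex.ofReal_div]
  congr 1
  rw [pow_two, mul_div_mul_left _ _ hn]

theorem stmt4 {n m : ℕ} (A : Matrix (Fin n) (Fin n) ℂ) (b : Fin n → ℂ)
    (θ : Fin m → ℝ) (hθ : Function.Injective θ)
    (hGne : ∀ k, Gv A b (θ k) ≠ 0)
    (c : Fin m → ℂ) (hc : ∀ k, c k ≠ 0)
    (x : Fin n → ℂ) (hx : x = ∑ k, c k • Gv A b (θ k))
    (τ : ℝ) (hτ : τ = ∑ k, ‖c k‖ * enormEuc (Gv A b (θ k)))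
    (S : Matrix (Fin n) (Fin n) ℂ)
    (hS : S = ∑ k, ((‖c k‖ / enormEuc (Gv A b (θ k)) : ℝ) : ℂ) •
      vecMulVec (Gv A b (θ k)) (star (Gv A b (θ k)))) :
    S.trace = (τ : ℂ) ∧ (blockM τ x S).PosSemidef := by
  set g : Fin m → Fin n → ℂ := fun k => Gv A b (θ k) with hg
  set r : Fin m → ℝ := fun k => enormEuc (g k) with hr
  have hrpos : ∀ k, 0 < r k := fun k => enormEuc_pos (hGne k)
  have hcpos : ∀ k, 0 < ‖c k‖ := fun k => norm_pos_iff.mpr (hc k)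
  set α : Fin m → ℝ := fun k => Real.sqrt (‖c k‖ * r k) with hα
  have hαpos : ∀ k, 0 < α k := fun k => Real.sqrt_pos.mpr (mul_pos (hcpos k) (hrpos k))
  have hαsq : ∀ k, α k ^ 2 = ‖c k‖ * r k := fun k =>
    Real.sq_sqrt (le_of_lt (mul_pos (hcpos k) (hrpos k)))
  have hαne : ∀ k, ((α k : ℂ)) ≠ 0 := fun k => by
    exact_mod_cast Complex.ofReal_ne_zero.mpr (ne_of_gt (hαpos k))
  constructor
  · rw [hS, Matrix.trace_sum]
    rw [hτ, Complex.ofReal_sum]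
    refine Finset.sum_congr rfl fun k _ => ?_
    rw [Matrix.trace_smul]
    have ht : (vecMulVec (g k) (star (g k))).trace = ((r k ^ 2 : ℝ) : ℂ) := by
      rw [Matrix.trace]
      simp only [Matrix.diag_apply, vecMulVec_apply, Pi.star_apply]
      rw [← enorm_sq (g k)]
      push_cast
      refine Finset.sum_congr rfl fun i _ => ?_
      rw [RCLike.star_def, Complex.mul_conj]
    rw [ht, smul_eq_mul, ← Complex.ofReal_mul]
    show ((‖c k‖ / r k * r k ^ 2 : ℝ) : ℂ) = ((‖c k‖ * r k : ℝ) : ℂ)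
    congr 1
    field_simp [(hrpos k).ne']
  · set v : Fin m → (Unit ⊕ Fin n) → ℂ := fun k =>
      Sum.elim (fun _ => ((α k : ℝ) : ℂ)) (fun i => (c k / (α k : ℂ)) * g k i) with hv
    have key : blockM τ x S = ∑ k, vecMulVec (v k) (star (v k)) := by
      ext i j
      rw [Matrix.sum_apply]
      rcases i with i | i <;> rcases j with j | j
      · -- (inl, inl)
        simp only [blockM, Matrix.fromBlocks_apply₁₁, Matrix.of_apply]
        rw [hτ, Complex.ofReal_sum]
        refine Finset.sum_congr rfl fun k _ => ?_
        simp only [vecMulVec_apply, hv, Sum.elim_inl, Pi.star_apply, RCLike.star_def,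
          Complex.conj_ofReal]
        rw [← Complex.ofReal_mul, ← sq, hαsq k]
      · -- (inl, inr)
        simp only [blockM, Matrix.fromBlocks_apply₁₂, Matrix.of_apply]
        rw [hx]
        simp only [Finset.sum_apply, Pi.smul_apply, smul_eq_mul, star_sum, star_mul']
        refine Finset.sum_congr rfl fun k _ => ?_
        simp only [vecMulVec_apply, hv, Sum.elim_inl, Sum.elim_inr, Pi.star_apply, star_mul',
          star_div₀, RCLike.star_def, Complex.conj_ofReal]
        rw [scal1 _ _ _ (hαne k)]
      · -- (inr, inl)
        simp only [blockM, Matrix.fromBlocks_apply₂₁, Matrix.of_apply]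
        rw [hx]
        simp only [Finset.sum_apply, Pi.smul_apply, smul_eq_mul]
        refine Finset.sum_congr rfl fun k _ => ?_
        simp only [vecMulVec_apply, hv, Sum.elim_inl, Sum.elim_inr, Pi.star_apply,
          RCLike.star_def, Complex.conj_ofReal]
        rw [scal2 _ _ _ (hαne k)]
      · -- (inr, inr)
        simp only [blockM, Matrix.fromBlocks_apply₂₂]
        rw [hS]
        simp only [Matrix.sum_apply, Pi.smul_apply, smul_eq_mul, vecMulVec_apply, Pi.star_apply]
        refine Finset.sum_congr rfl fun k _ => ?_
        simp only [hv, Sum.elim_inr, Pi.star_apply, star_mul', star_div₀, RCLike.star_def,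
          Complex.conj_ofReal]
        exact (scal3 (c k) (α k) (r k) (hc k) (ne_of_gt (hαpos k)) (ne_of_gt (hrpos k))
          (hαsq k) (g k i) ((starRingEnd ℂ) (g k j))).symm
    rw [key]
    exact Finset.sum_induction _ _ (fun a b ha hb => ha.add hb) Matrix.PosSemidef.zero
      (fun k _ => psd_outer (v k))
end

section
/- (Dual certificate implies uniqueness.) Let x = Σ_{k=1}^m G(θ_k)c_k with θ_k ∈ Θ pairwise distinct, c_k ≠ 0, and m < n. Suppose there exists q ∈ ℂⁿ such that the function Q(θ) = G(θ)*q satisfies: (i) Q(θ_k) = (c_k/|c_k|)‖G(θ_k)‖ for all θ_k ∈ Θ, and (ii) |Q(θ)| < ‖G(θ)‖ for all θ ∉ Θ. Then the atomic norm satisfies ‖x‖_A = Σ_{k=1}^m |c_k|‖G(θ_k)‖, and this decomposition is the unique atomic decomposition achieving the atomic norm. -/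
open Matrix

/-- Euclidean norm on ℂⁿ. -/
noncomputable def enorm {n : ℕ} (v : Fin n → ℂ) : ℝ :=
  Real.sqrt (∑ i, Complex.normSq (v i))

/-- The atomic norm associated with the atoms G(θ), θ ∈ [0, 2π). -/
noncomputable def atomicNorm {n : ℕ} (A : Matrix (Fin n) (Fin n) ℂ) (b : Fin n → ℂ)
    (x : Fin n → ℂ) : ℝ :=
  sInf { t : ℝ | ∃ (m : ℕ) (θ : Fin m → ℝ) (c : Fin m → ℂ),
    (∀ k, θ k ∈ Set.Ico (0 : ℝ) (2 * Real.pi)) ∧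
    x = ∑ k, c k • Gv A b (θ k) ∧
    t = ∑ k, ‖c k‖ * _root_.enorm (Gv A b (θ k)) }


open Matrix Polynomial

theorem mysum_mulVec {n : ℕ} {ι : Type*} (s : Finset ι)
    (f : ι → Matrix (Fin n) (Fin n) ℂ) (b : Fin n → ℂ) :
    (∑ i ∈ s, f i) *ᵥ b = ∑ i ∈ s, f i *ᵥ b := by
  ext j
  simp only [Matrix.mulVec, dotProduct, Finset.sum_apply, Matrix.sum_apply,
    Finset.sum_mul]
  rw [Finset.sum_comm]

theorem mymulVec_sum {n : ℕ} {ι : Type*} (s : Finset ι)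
    (N : Matrix (Fin n) (Fin n) ℂ) (v : ι → Fin n → ℂ) :
    N *ᵥ (∑ i ∈ s, v i) = ∑ i ∈ s, N *ᵥ v i := by
  ext j
  simp only [Matrix.mulVec, dotProduct, Finset.sum_apply, Finset.mul_sum]
  rw [Finset.sum_comm]

theorem my_exp_inj {a b : ℝ} (ha : a ∈ Set.Ico (0:ℝ) (2*Real.pi))
    (hb : b ∈ Set.Ico (0:ℝ) (2*Real.pi))
    (h : Complex.exp (-(a:ℂ) * Complex.I) = Complex.exp (-(b:ℂ) * Complex.I)) : a = b := by
  have h2 : Complex.exp (((b:ℂ) - a) * Complex.I) = 1 := by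
    rw [show ((b:ℂ) - a) * Complex.I = (-(a:ℂ) * Complex.I) - (-(b:ℂ) * Complex.I) by ring,
      Complex.exp_sub, h, div_self (Complex.exp_ne_zero _)]
  rw [Complex.exp_eq_one_iff] at h2
  obtain ⟨k, hk⟩ := h2
  have hk' : ((b:ℂ) - a) = (k : ℂ) * (2 * Real.pi) := by
    have hI : ((b:ℂ) - a) * Complex.I = ((k:ℂ) * (2 * Real.pi)) * Complex.I := by
      rw [hk]; ring
    exact mul_right_cancel₀ Complex.I_ne_zero hI
  have hre : b - a = (k : ℝ) * (2 * Real.pi) := by exact_mod_cast hk'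
  have hpi := Real.pi_pos
  have hk0 : k = 0 := by
    rcases lt_trichotomy k 0 with h0 | h0 | h0
    · have : (k:ℝ) ≤ -1 := by exact_mod_cast (by omega : k ≤ -1)
      nlinarith [ha.1, ha.2, hb.1, hb.2]
    · exact h0
    · have : (1:ℝ) ≤ (k:ℝ) := by exact_mod_cast h0
      nlinarith [ha.1, ha.2, hb.1, hb.2]
  rw [hk0] at hre
  simp at hre
  linarith

theorem my_det_unit {n : ℕ} (A : Matrix (Fin n) (Fin n) ℂ) (hA : SchurStable A)
    (z : ℂ) (hz : ‖z‖ = 1) :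
    IsUnit ((1 : Matrix (Fin n) (Fin n) ℂ) - z • A).det := by
  rw [isUnit_iff_ne_zero]
  intro hdet
  obtain ⟨v, hv0, hv⟩ := (Matrix.exists_mulVec_eq_zero_iff).2 hdet
  have hz0 : z ≠ 0 := by intro h; rw [h] at hz; simp at hz
  have hAv : A *ᵥ v = z⁻¹ • v := by
    rw [Matrix.sub_mulVec, Matrix.one_mulVec, Matrix.smul_mulVec, sub_eq_zero] at hv
    calc A *ᵥ v = z⁻¹ • (z • (A *ᵥ v)) := by rw [smul_smul, inv_mul_cancel₀ hz0, one_smul]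
    _ = z⁻¹ • v := by rw [← hv]
  have hmem : z⁻¹ ∈ spectrum ℂ A := by
    rw [spectrum.mem_iff, Algebra.algebraMap_eq_smul_one, Matrix.isUnit_iff_isUnit_det,
      isUnit_iff_ne_zero, ne_eq, not_not, ← Matrix.exists_mulVec_eq_zero_iff]
    refine ⟨v, hv0, ?_⟩
    rw [Matrix.sub_mulVec, Matrix.smul_mulVec, Matrix.one_mulVec, hAv, sub_self]
  have hlt := hA _ hmem
  rw [norm_inv, hz] at hlt
  norm_num at hlt

theorem my_norm_exp (θ : ℝ) : ‖Complex.exp (-(θ:ℂ) * Complex.I)‖ = 1 := by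
  rw [Complex.norm_exp]
  simp

theorem my_Gv_mulVec {n : ℕ} (A : Matrix (Fin n) (Fin n) ℂ) (b : Fin n → ℂ)
    (hA : SchurStable A) (θ : ℝ) :
    ((1 : Matrix (Fin n) (Fin n) ℂ) - Complex.exp (-(θ:ℂ) * Complex.I) • A) *ᵥ Gv A b θ = b := by
  have hu := my_det_unit A hA _ (my_norm_exp θ)
  rw [Gv, Matrix.mulVec_mulVec, Matrix.mul_nonsing_inv _ hu, Matrix.one_mulVec]

theorem my_enorm_nonneg {n : ℕ} (v : Fin n → ℂ) : 0 ≤ _root_.enorm v := Real.sqrt_nonneg _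

theorem my_enorm_pos {n : ℕ} (v : Fin n → ℂ) (hv : v ≠ 0) : 0 < _root_.enorm v := by
  rw [_root_.enorm, Real.sqrt_pos]
  obtain ⟨i, hi⟩ := Function.ne_iff.1 hv
  exact Finset.sum_pos' (fun i _ => Complex.normSq_nonneg _)
    ⟨i, Finset.mem_univ i, Complex.normSq_pos.2 hi⟩

theorem my_b_ne_zero {n : ℕ} (A : Matrix (Fin n) (Fin n) ℂ) (b : Fin n → ℂ)
    (hreach : Reachable A b) (hn : 0 < n) : b ≠ 0 := by
  intro hb
  subst hb
  have : (⊤ : Submodule ℂ (Fin n → ℂ)) = ⊥ := by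
    rw [← hreach]
    simp [Submodule.span_eq_bot]
  have h3 : Nonempty (Fin n) := ⟨⟨0, hn⟩⟩
  exact top_ne_bot this

theorem my_Gv_ne_zero {n : ℕ} (A : Matrix (Fin n) (Fin n) ℂ) (b : Fin n → ℂ)
    (hA : SchurStable A) (hreach : Reachable A b) (hn : 0 < n) (θ : ℝ) :
    Gv A b θ ≠ 0 := by
  intro h
  have := my_Gv_mulVec A b hA θ
  rw [h, Matrix.mulVec_zero] at this
  exact my_b_ne_zero A b hreach hn this.symm

theorem my_deg1 (a : ℂ) : (1 - Polynomial.C a * Polynomial.X).natDegree ≤ 1 := by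
  have h : (1 - Polynomial.C a * Polynomial.X) = Polynomial.C (-a) * Polynomial.X + Polynomial.C 1 := by
    rw [map_neg, _root_.map_one]; ring
  rw [h]
  exact Polynomial.natDegree_linear_le

theorem my_linIndep {n m : ℕ} (A : Matrix (Fin n) (Fin n) ℂ) (b : Fin n → ℂ)
    (hA : SchurStable A) (hreach : Reachable A b) (hmn : m ≤ n)
    (θ : Fin m → ℝ) (hθmem : ∀ k, θ k ∈ Set.Ico (0:ℝ) (2*Real.pi))
    (hθinj : Function.Injective θ) :
    LinearIndependent ℂ (fun k => Gv A b (θ k)) := by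
  rw [Fintype.linearIndependent_iff]
  intro g hg k
  set z : Fin m → ℂ := fun k => Complex.exp (-(θ k : ℂ) * Complex.I) with hzdef
  have hz0 : ∀ l, z l ≠ 0 := fun l => Complex.exp_ne_zero _
  have hzinj : Function.Injective z := fun a b h => hθinj (my_exp_inj (hθmem a) (hθmem b) h)
  set M : Fin m → Matrix (Fin n) (Fin n) ℂ :=
    fun l => (1 : Matrix (Fin n) (Fin n) ℂ) - z l • A with hMdef
  set qp : Fin m → Polynomial ℂ :=
    fun l => ∏ l' ∈ Finset.univ.erase l, (1 - Polynomial.C (z l') * Polynomial.X) with hqpdef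
  set p : Polynomial ℂ := ∑ l, Polynomial.C (g l) * qp l with hpdef
  have haevalM : ∀ l, (Polynomial.aeval A) (1 - Polynomial.C (z l) * Polynomial.X) = M l := by
    intro l
    simp only [map_sub, _root_.map_one, _root_.map_mul, Polynomial.aeval_C, Polynomial.aeval_X, hMdef]
    rw [Algebra.algebraMap_eq_smul_one, smul_mul_assoc, one_mul]
  have hMG : ∀ l, M l *ᵥ Gv A b (θ l) = b := fun l => my_Gv_mulVec A b hA (θ l)
  have hkey : (Polynomial.aeval A p) *ᵥ b = 0 := by
    have h1 : ∀ l, (Polynomial.aeval A (qp l * (1 - Polynomial.C (z l) * Polynomial.X)))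
          *ᵥ Gv A b (θ l) = (Polynomial.aeval A (qp l)) *ᵥ b := by
      intro l
      rw [_root_.map_mul, haevalM, ← Matrix.mulVec_mulVec, hMG]
    have h2 : ∀ l, qp l * (1 - Polynomial.C (z l) * Polynomial.X)
        = ∏ l', (1 - Polynomial.C (z l') * Polynomial.X) := by
      intro l
      simp only [hqpdef]
      rw [mul_comm]
      exact Finset.mul_prod_erase Finset.univ
        (fun l' => 1 - Polynomial.C (z l') * Polynomial.X) (Finset.mem_univ l)
    calc (Polynomial.aeval A p) *ᵥ b
        = ∑ l, g l • ((Polynomial.aeval A (qp l)) *ᵥ b) := by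
          rw [hpdef, map_sum, mysum_mulVec]
          refine Finset.sum_congr rfl fun l _ => ?_
          rw [_root_.map_mul, Polynomial.aeval_C, Algebra.algebraMap_eq_smul_one, smul_mul_assoc,
            one_mul, Matrix.smul_mulVec]
      _ = ∑ l, g l • ((Polynomial.aeval A (∏ l', (1 - Polynomial.C (z l') * Polynomial.X)))
            *ᵥ Gv A b (θ l)) := by
          refine Finset.sum_congr rfl fun l _ => ?_
          rw [← h2 l, h1 l]
      _ = (Polynomial.aeval A (∏ l', (1 - Polynomial.C (z l') * Polynomial.X)))
            *ᵥ (∑ l, g l • Gv A b (θ l)) := by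
          rw [mymulVec_sum]
          exact Finset.sum_congr rfl fun l _ => (Matrix.mulVec_smul _ _ _).symm
      _ = 0 := by rw [hg, Matrix.mulVec_zero]
  have hm1 : 0 < m := k.pos
  have hdegq : ∀ l, (qp l).natDegree ≤ m - 1 := by
    intro l
    refine le_trans (Polynomial.natDegree_prod_le _ _) ?_
    calc ∑ l' ∈ Finset.univ.erase l, (1 - Polynomial.C (z l') * Polynomial.X).natDegree
        ≤ ∑ _l' ∈ Finset.univ.erase l, 1 := Finset.sum_le_sum (f := fun l' => (1 - Polynomial.C (z l') * Polynomial.X).natDegree) (fun l' _ => my_deg1 (z l'))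
      _ = (Finset.univ.erase l).card := by simp
      _ = m - 1 := by rw [Finset.card_erase_of_mem (Finset.mem_univ l)]; simp
  have hdeg : p.natDegree < n := by
    refine lt_of_le_of_lt (Polynomial.natDegree_sum_le _ _) ?_
    rw [Finset.fold_max_lt]
    refine ⟨lt_of_lt_of_le hm1 hmn, fun l _ => ?_⟩
    have h3 : (Polynomial.C (g l) * qp l).natDegree ≤ m - 1 :=
      le_trans (Polynomial.natDegree_C_mul_le _ _) (hdegq l)
    exact lt_of_le_of_lt h3 (by omega)
  have hbasis : LinearIndependent ℂ (fun j : Fin n => (A ^ (j:ℕ)) *ᵥ b) :=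
    linearIndependent_of_top_le_span_of_card_eq_finrank (le_of_eq hreach.symm)
      (by simp [Module.finrank_fin_fun])
  have hcoeff : ∀ j : Fin n, p.coeff (j:ℕ) = 0 := by
    rw [Fintype.linearIndependent_iff] at hbasis
    apply hbasis (fun j => p.coeff (j:ℕ))
    calc ∑ j : Fin n, p.coeff (j:ℕ) • ((A^(j:ℕ)) *ᵥ b)
        = ∑ i ∈ Finset.range n, p.coeff i • ((A^i) *ᵥ b) :=
          Fin.sum_univ_eq_sum_range (fun i => p.coeff i • ((A^i) *ᵥ b)) n
      _ = (∑ i ∈ Finset.range n, p.coeff i • A^i) *ᵥ b := by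
          rw [mysum_mulVec]
          exact Finset.sum_congr rfl fun i _ => (Matrix.smul_mulVec _ _ _).symm
      _ = (Polynomial.aeval A p) *ᵥ b := by rw [← Polynomial.aeval_eq_sum_range' hdeg]
      _ = 0 := hkey
  have hp0 : p = 0 := by
    ext i
    rw [Polynomial.coeff_zero]
    by_cases hi : i < n
    · exact hcoeff ⟨i, hi⟩
    · exact Polynomial.coeff_eq_zero_of_natDegree_lt
        (lt_of_lt_of_le hdeg (le_of_not_gt hi))
  have heval : ∑ l, g l * Polynomial.eval (z k)⁻¹ (qp l) = 0 := by
    have h := congrArg (Polynomial.eval ((z k)⁻¹)) hp0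
    rw [hpdef] at h
    simpa [Polynomial.eval_finset_sum] using h
  rw [Finset.sum_eq_single k] at heval
  · have hne : Polynomial.eval (z k)⁻¹ (qp k) ≠ 0 := by
      rw [hqpdef]
      simp only [Polynomial.eval_prod]
      rw [Finset.prod_ne_zero_iff]
      intro l hl
      simp only [Polynomial.eval_sub, Polynomial.eval_one, Polynomial.eval_mul,
        Polynomial.eval_C, Polynomial.eval_X]
      intro h0
      have h1 : z l * (z k)⁻¹ = 1 := (sub_eq_zero.1 h0).symm
      have h2 : z l = z k := by
        field_simp at h1
        exact (div_eq_one_iff_eq (hz0 k)).1 h1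
      exact (Finset.mem_erase.1 hl).1 (hzinj h2)
    exact (mul_eq_zero.1 heval).resolve_right hne
  · intro l _ hl
    have h4 : Polynomial.eval (z k)⁻¹ (qp l) = 0 := by
      rw [hqpdef]
      simp only [Polynomial.eval_prod]
      refine Finset.prod_eq_zero (Finset.mem_erase.2 ⟨Ne.symm hl, Finset.mem_univ k⟩) ?_
      simp only [Polynomial.eval_sub, Polynomial.eval_one, Polynomial.eval_mul,
        Polynomial.eval_C, Polynomial.eval_X]
      rw [mul_inv_cancel₀ (hz0 k), sub_self]
    rw [h4, mul_zero]
  · intro h; exact absurd (Finset.mem_univ k) h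

theorem my_dot {n m' : ℕ} (v : Fin m' → Fin n → ℂ) (c' : Fin m' → ℂ) (q : Fin n → ℂ) :
    star (∑ k, c' k • v k) ⬝ᵥ q = ∑ k, (starRingEnd ℂ) (c' k) * (star (v k) ⬝ᵥ q) := by
  simp only [dotProduct, Pi.star_apply, Finset.sum_apply, Pi.smul_apply, smul_eq_mul,
    RCLike.star_def, map_sum, _root_.map_mul, Finset.sum_mul, Finset.mul_sum]
  rw [Finset.sum_comm]
  refine Finset.sum_congr rfl fun k _ => Finset.sum_congr rfl fun i _ => by ring

theorem stmt8 {n m : ℕ} (A : Matrix (Fin n) (Fin n) ℂ) (b : Fin n → ℂ)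
    (hA : SchurStable A) (hreach : Reachable A b) (hm : m < n)
    (θ : Fin m → ℝ) (hθmem : ∀ k, θ k ∈ Set.Ico (0 : ℝ) (2 * Real.pi))
    (hθinj : Function.Injective θ)
    (c : Fin m → ℂ) (hc : ∀ k, c k ≠ 0)
    (x : Fin n → ℂ) (hx : x = ∑ k, c k • Gv A b (θ k))
    (q : Fin n → ℂ)
    (hinterp : ∀ k, star (Gv A b (θ k)) ⬝ᵥ q
      = (c k / (‖c k‖ : ℂ)) * (enorm (Gv A b (θ k)) : ℂ))
    (hineq : ∀ θ' ∈ Set.Ico (0 : ℝ) (2 * Real.pi), θ' ∉ Set.range θ →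
      ‖star (Gv A b θ') ⬝ᵥ q‖ < _root_.enorm (Gv A b θ')) :
    atomicNorm A b x = ∑ k, ‖c k‖ * _root_.enorm (Gv A b (θ k)) ∧
    ∀ (m' : ℕ) (θ' : Fin m' → ℝ) (c' : Fin m' → ℂ),
      (∀ k, θ' k ∈ Set.Ico (0 : ℝ) (2 * Real.pi)) →
      Function.Injective θ' → (∀ k, c' k ≠ 0) →
      x = ∑ k, c' k • Gv A b (θ' k) →
      (∑ k, ‖c' k‖ * _root_.enorm (Gv A b (θ' k))) = atomicNorm A b x →
      Multiset.map (fun k => (θ' k, c' k)) Finset.univ.val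
        = Multiset.map (fun k => (θ k, c k)) Finset.univ.val := by
  have hn : 0 < n := lt_of_le_of_lt (Nat.zero_le m) hm
  set S := ∑ k, ‖c k‖ * _root_.enorm (Gv A b (θ k)) with hSdef
  have hQle : ∀ t ∈ Set.Ico (0:ℝ) (2*Real.pi), ‖star (Gv A b t) ⬝ᵥ q‖ ≤ _root_.enorm (Gv A b t) := by
    intro t ht
    by_cases hmem2 : t ∈ Set.range θ
    · obtain ⟨k, rfl⟩ := hmem2
      rw [hinterp k, norm_mul, norm_div, Complex.norm_real, Complex.norm_real,
        Real.norm_eq_abs, Real.norm_eq_abs, abs_norm,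
        div_self (norm_ne_zero_iff.2 (hc k)), one_mul,
        abs_of_nonneg (my_enorm_nonneg _)]
    · exact (hineq t ht hmem2).le
  have hxq : star x ⬝ᵥ q = ((S : ℝ) : ℂ) := by
    rw [hx, my_dot, hSdef]
    push_cast
    refine Finset.sum_congr rfl fun k _ => ?_
    rw [hinterp k]
    have hck : ((‖c k‖ : ℝ) : ℂ) ≠ 0 := by
      exact_mod_cast (norm_ne_zero_iff.2 (hc k))
    have hcc : (starRingEnd ℂ) (c k) * c k = ((‖c k‖^2 : ℝ) : ℂ) := by
      rw [mul_comm, Complex.mul_conj]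
      norm_cast
      rw [← Complex.sq_norm]
    rw [show (starRingEnd ℂ) (c k) * (c k / (‖c k‖:ℂ) * ((_root_.enorm (Gv A b (θ k)) : ℝ) : ℂ))
        = ((starRingEnd ℂ) (c k) * c k) * ((_root_.enorm (Gv A b (θ k)) : ℝ) : ℂ) / (‖c k‖:ℂ) by ring,
      hcc]
    have hck' : ((‖c k‖ : ℝ) : ℂ) ≠ 0 := hck
    field_simp
    push_cast
    ring
  have hre : S = (star x ⬝ᵥ q).re := by rw [hxq, Complex.ofReal_re]
  have hterm_le : ∀ (m' : ℕ) (θ' : Fin m' → ℝ) (c' : Fin m' → ℂ),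
      (∀ k, θ' k ∈ Set.Ico (0:ℝ) (2*Real.pi)) → ∀ k,
      ((starRingEnd ℂ) (c' k) * (star (Gv A b (θ' k)) ⬝ᵥ q)).re
        ≤ ‖c' k‖ * _root_.enorm (Gv A b (θ' k)) := by
    intro m' θ' c' hmem' k
    have h1 := Complex.re_le_norm ((starRingEnd ℂ) (c' k) * (star (Gv A b (θ' k)) ⬝ᵥ q))
    rw [norm_mul, RCLike.norm_conj] at h1
    exact le_trans h1 (mul_le_mul_of_nonneg_left (hQle _ (hmem' k)) (norm_nonneg _))
  have hsum_eq : ∀ (m' : ℕ) (θ' : Fin m' → ℝ) (c' : Fin m' → ℂ),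
      x = ∑ k, c' k • Gv A b (θ' k) →
      S = ∑ k, ((starRingEnd ℂ) (c' k) * (star (Gv A b (θ' k)) ⬝ᵥ q)).re := by
    intro m' θ' c' hx'
    rw [hre, hx', my_dot, Complex.re_sum]
  have hlow : ∀ (m' : ℕ) (θ' : Fin m' → ℝ) (c' : Fin m' → ℂ),
      (∀ k, θ' k ∈ Set.Ico (0:ℝ) (2*Real.pi)) → x = ∑ k, c' k • Gv A b (θ' k) →
      S ≤ ∑ k, ‖c' k‖ * _root_.enorm (Gv A b (θ' k)) := by
    intro m' θ' c' hmem' hx'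
    rw [hsum_eq m' θ' c' hx']
    exact Finset.sum_le_sum fun k _ => hterm_le m' θ' c' hmem' k
  have hSmem : S ∈ { t : ℝ | ∃ (m' : ℕ) (θ' : Fin m' → ℝ) (c' : Fin m' → ℂ),
      (∀ k, θ' k ∈ Set.Ico (0 : ℝ) (2 * Real.pi)) ∧
      x = ∑ k, c' k • Gv A b (θ' k) ∧
      t = ∑ k, ‖c' k‖ * _root_.enorm (Gv A b (θ' k)) } := ⟨m, θ, c, hθmem, hx, rfl⟩
  have hbdd : ∀ t ∈ { t : ℝ | ∃ (m' : ℕ) (θ' : Fin m' → ℝ) (c' : Fin m' → ℂ),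
      (∀ k, θ' k ∈ Set.Ico (0 : ℝ) (2 * Real.pi)) ∧
      x = ∑ k, c' k • Gv A b (θ' k) ∧
      t = ∑ k, ‖c' k‖ * _root_.enorm (Gv A b (θ' k)) }, S ≤ t := by
    rintro t ⟨m', θ', c', hmem', hx', rfl⟩
    exact hlow m' θ' c' hmem' hx'
  have hAtom : atomicNorm A b x = S :=
    le_antisymm (csInf_le ⟨S, hbdd⟩ hSmem) (le_csInf ⟨S, hSmem⟩ hbdd)
  refine ⟨hAtom, ?_⟩
  intro m' θ' c' hmem' hinj' hc' hx' hval
  rw [hAtom] at hval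
  have hterm : ∀ k, ((starRingEnd ℂ) (c' k) * (star (Gv A b (θ' k)) ⬝ᵥ q)).re
      = ‖c' k‖ * _root_.enorm (Gv A b (θ' k)) := by
    have h := (Finset.sum_eq_sum_iff_of_le
      (fun k _ => hterm_le m' θ' c' hmem' k)).1
      (by rw [← hsum_eq m' θ' c' hx', hval])
    exact fun k => h k (Finset.mem_univ k)
  have hrange : ∀ k, θ' k ∈ Set.range θ := by
    intro k
    by_contra hk
    have hstrict := hineq (θ' k) (hmem' k) hk
    have h1 := hterm k
    have h2 := Complex.re_le_norm ((starRingEnd ℂ) (c' k) * (star (Gv A b (θ' k)) ⬝ᵥ q))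
    rw [norm_mul, RCLike.norm_conj] at h2
    have h3 : ‖c' k‖ * ‖star (Gv A b (θ' k)) ⬝ᵥ q‖ < ‖c' k‖ * _root_.enorm (Gv A b (θ' k)) :=
      mul_lt_mul_of_pos_left hstrict (norm_pos_iff.2 (hc' k))
    linarith
  choose σ hσ using hrange
  have hσinj : Function.Injective σ := fun a b2 hab => hinj' (by rw [← hσ a, ← hσ b2, hab])
  have hlin := my_linIndep A b hA hreach hm.le θ hθmem hθinj
  rw [Fintype.linearIndependent_iff] at hlin
  set d : Fin m → ℂ :=
    fun j => (∑ k ∈ Finset.univ.filter (fun k => σ k = j), c' k) - c j with hddef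
  have hdsum : ∑ j, d j • Gv A b (θ j) = 0 := by
    simp only [hddef, sub_smul, Finset.sum_sub_distrib, Finset.sum_smul]
    rw [sub_eq_zero, ← hx, hx',
      ← Finset.sum_fiberwise Finset.univ σ (fun k => c' k • Gv A b (θ' k))]
    refine Finset.sum_congr rfl fun j _ => Finset.sum_congr rfl fun k hk => ?_
    have hθeq : θ' k = θ j := by rw [← hσ k, (Finset.mem_filter.1 hk).2]
    rw [hθeq]
  have hd0 : ∀ j, d j = 0 := hlin d hdsum
  have hσsurj : Function.Surjective σ := by
    intro j
    by_contra hj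
    push_neg at hj
    have hfe : Finset.univ.filter (fun k => σ k = j) = ∅ := by
      ext k; simp [hj k]
    have h5 := hd0 j
    rw [hddef] at h5
    simp only [hfe, Finset.sum_empty, zero_sub, neg_eq_zero] at h5
    exact hc j h5
  have hc'eq : ∀ k, c' k = c (σ k) := by
    intro k
    have hfib : Finset.univ.filter (fun k' => σ k' = σ k) = {k} := by
      ext k'; simp [hσinj.eq_iff]
    have h5 := hd0 (σ k)
    rw [hddef] at h5
    simp only [hfib, Finset.sum_singleton] at h5
    exact sub_eq_zero.1 h5
  have hbij : Function.Bijective σ := ⟨hσinj, hσsurj⟩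
  calc Multiset.map (fun k => (θ' k, c' k)) Finset.univ.val
      = Multiset.map ((fun j => (θ j, c j)) ∘ σ) Finset.univ.val := by
        refine Multiset.map_congr rfl fun k _ => ?_
        simp only [Function.comp_apply]
        rw [← hσ k, ← hc'eq k]
    _ = Multiset.map (fun j => (θ j, c j)) (Multiset.map σ Finset.univ.val) := by
        rw [Multiset.map_map]
    _ = Multiset.map (fun j => (θ j, c j)) Finset.univ.val := by
        congr 1
        calc Multiset.map σ Finset.univ.val
            = (Finset.map (Equiv.ofBijective σ hbij).toEmbedding Finset.univ).val := rfl
          _ = Finset.univ.val := by rw [Finset.map_univ_equiv]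
end

section
/- Let ĝ(θ) = ‖G(θ)‖² − |G(θ)*q̂|² with ‖q̂‖ ≤ 1, and suppose x = Σ_{θ_k ∈ Θ} G(θ_k)c_k (all c_k ≠ 0, θ_k pairwise distinct) satisfies Re⟨q̂, x⟩ = ‖x‖_A = Σ_k |c_k|‖G(θ_k)‖ with |G(θ)*q̂| ≤ ‖G(θ)‖ for all θ. Then every true frequency is recovered: Θ ⊆ Θ̂ := {θ : ĝ(θ) = 0}. -/
open Matrix

theorem stmt16_aux {n m : ℕ} (A : Matrix (Fin n) (Fin n) ℂ) (b : Fin n → ℂ)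
    (θ : Fin m → ℝ)
    (c : Fin m → ℂ) (hc : ∀ k, c k ≠ 0)
    (x : Fin n → ℂ) (hx : x = ∑ k, c k • Gv A b (θ k))
    (qhat : Fin n → ℂ)
    (hbound : ∀ θ' : ℝ, ‖star (Gv A b θ') ⬝ᵥ qhat‖ ≤ _root_.enorm (Gv A b θ'))
    (hopt : (star x ⬝ᵥ qhat).re = ∑ k, ‖c k‖ * _root_.enorm (Gv A b (θ k))) :
    ∀ k, _root_.enorm (Gv A b (θ k)) ^ 2 - ‖star (Gv A b (θ k)) ⬝ᵥ qhat‖ ^ 2 = 0 := by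
  have hdot : star x ⬝ᵥ qhat
      = ∑ k, (starRingEnd ℂ) (c k) * (star (Gv A b (θ k)) ⬝ᵥ qhat) := by
    subst hx
    simp only [dotProduct, Finset.sum_apply, Pi.star_apply, Pi.smul_apply, smul_eq_mul,
      star_sum, star_mul', Finset.sum_mul, Finset.mul_sum]
    rw [Finset.sum_comm]
    congr 1; ext k; congr 1; ext i; simp only [Complex.star_def]; ring
  have hre : ∑ k, ((starRingEnd ℂ) (c k) * (star (Gv A b (θ k)) ⬝ᵥ qhat)).re
      = ∑ k, ‖c k‖ * _root_.enorm (Gv A b (θ k)) := by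
    rw [← Complex.re_sum, ← hdot, hopt]
  have hle : ∀ k ∈ Finset.univ, ((starRingEnd ℂ) (c k) * (star (Gv A b (θ k)) ⬝ᵥ qhat)).re
      ≤ ‖c k‖ * _root_.enorm (Gv A b (θ k)) := by
    intro k _
    calc ((starRingEnd ℂ) (c k) * (star (Gv A b (θ k)) ⬝ᵥ qhat)).re
        ≤ ‖(starRingEnd ℂ) (c k) * (star (Gv A b (θ k)) ⬝ᵥ qhat)‖ := Complex.re_le_norm _
      _ = ‖c k‖ * ‖star (Gv A b (θ k)) ⬝ᵥ qhat‖ := by rw [norm_mul, Complex.norm_conj]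
      _ ≤ ‖c k‖ * _root_.enorm (Gv A b (θ k)) :=
          mul_le_mul_of_nonneg_left (hbound _) (norm_nonneg _)
  have heq := (Finset.sum_eq_sum_iff_of_le hle).1 hre
  intro k
  have hk := heq k (Finset.mem_univ k)
  have h1 : ‖c k‖ * _root_.enorm (Gv A b (θ k)) ≤ ‖c k‖ * ‖star (Gv A b (θ k)) ⬝ᵥ qhat‖ := by
    rw [← hk]
    calc ((starRingEnd ℂ) (c k) * (star (Gv A b (θ k)) ⬝ᵥ qhat)).re
        ≤ ‖(starRingEnd ℂ) (c k) * (star (Gv A b (θ k)) ⬝ᵥ qhat)‖ := Complex.re_le_norm _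
      _ = ‖c k‖ * ‖star (Gv A b (θ k)) ⬝ᵥ qhat‖ := by rw [norm_mul, Complex.norm_conj]
  have hcpos : 0 < ‖c k‖ := norm_pos_iff.2 (hc k)
  have h2 : _root_.enorm (Gv A b (θ k)) ≤ ‖star (Gv A b (θ k)) ⬝ᵥ qhat‖ :=
    le_of_mul_le_mul_left h1 hcpos
  have h3 : _root_.enorm (Gv A b (θ k)) = ‖star (Gv A b (θ k)) ⬝ᵥ qhat‖ :=
    le_antisymm h2 (hbound _)
  rw [h3]; ring


theorem stmt16 {n m : ℕ} (A : Matrix (Fin n) (Fin n) ℂ) (b : Fin n → ℂ) (hm : m < n)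
    (θ : Fin m → ℝ) (hθmem : ∀ k, θ k ∈ Set.Ico (0 : ℝ) (2 * Real.pi))
    (hθinj : Function.Injective θ)
    (c : Fin m → ℂ) (hc : ∀ k, c k ≠ 0)
    (x : Fin n → ℂ) (hx : x = ∑ k, c k • Gv A b (θ k))
    (qhat : Fin n → ℂ) (hqhat : _root_.enorm qhat ≤ 1)
    (hbound : ∀ θ' : ℝ, ‖star (Gv A b θ') ⬝ᵥ qhat‖ ≤ _root_.enorm (Gv A b θ'))
    (hAnorm : atomicNorm A b x = ∑ k, ‖c k‖ * _root_.enorm (Gv A b (θ k)))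
    (hopt : (star x ⬝ᵥ qhat).re = atomicNorm A b x) :
    ∀ k, _root_.enorm (Gv A b (θ k)) ^ 2 - ‖star (Gv A b (θ k)) ⬝ᵥ qhat‖ ^ 2 = 0 := by
  exact stmt16_aux A b θ c hc x hx qhat hbound (hAnorm ▸ hopt)
end

section
/- Let x = Σ_{k=1}^m G(θ_k)c_k with m < n, c_k ≠ 0, θ_k pairwise distinct, and let q ∈ ℂⁿ and Hermitian Y with G(θ)*YG(θ) ≡ 0 satisfy Q(θ_k) := G(θ_k)*q = (c_k/|c_k|)‖G(θ_k)‖ for k = 1,…,m and [[I+Y, q],[q*,1]] ⪰ 0. Then for each k, the vector v_k = (G(θ_k), −u_k*) ∈ ℂ^{n+1}, with u_k = (c_k/|c_k|)‖G(θ_k)‖, lies in the kernel of [[I+Y, q],[q*,1]]; moreover the v_k are linearly independent, so the kernel has dimension at least m and rank[[I+Y,q],[q*,1]] ≤ n + 1 − m. -/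
set_option maxRecDepth 8000

open Matrix Polynomial
open scoped ComplexOrder

/-- The block matrix [[I + Y, q],[q*, 1]]. -/
def blockD {n : ℕ} (Y : Matrix (Fin n) (Fin n) ℂ) (q : Fin n → ℂ) :
    Matrix (Fin n ⊕ Unit) (Fin n ⊕ Unit) ℂ :=
  Matrix.fromBlocks (1 + Y) (Matrix.of fun i _ => q i)
    (Matrix.of fun _ j => star (q j)) (Matrix.of fun _ _ => (1 : ℂ))

lemma aux_sum_mulVec {n : ℕ} {ι : Type*} [DecidableEq ι] (s : Finset ι) (M : ι → Matrix (Fin n) (Fin n) ℂ)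
    (b : Fin n → ℂ) : (∑ i ∈ s, M i) *ᵥ b = ∑ i ∈ s, M i *ᵥ b := by
  induction s using Finset.induction with
  | empty => simp
  | insert _ _ h ih => simp [Finset.sum_insert h, Matrix.add_mulVec, ih]

lemma aux_poly_ann {n : ℕ} {A : Matrix (Fin n) (Fin n) ℂ} {b : Fin n → ℂ}
    (hreach : Reachable A b) {p : ℂ[X]} (hdeg : p.natDegree < n)
    (h : (Polynomial.aeval A p) *ᵥ b = 0) : p = 0 := by
  by_contra hp
  set d := p.natDegree with hd
  set W : Submodule ℂ (Fin n → ℂ) :=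
    Submodule.span ℂ (Set.range fun j : Fin d => (A ^ (j : ℕ)) *ᵥ b) with hW
  have hgen : ∀ i : ℕ, i < d → (A ^ i) *ᵥ b ∈ W := fun i hi =>
    Submodule.subset_span ⟨⟨i, hi⟩, rfl⟩
  have hsum : ∑ i ∈ Finset.range (d + 1), p.coeff i • ((A ^ i) *ᵥ b) = 0 := by
    rw [Polynomial.aeval_eq_sum_range] at h
    have e1 : (∑ i ∈ Finset.range (p.natDegree + 1), p.coeff i • A ^ i) *ᵥ b
        = ∑ i ∈ Finset.range (p.natDegree + 1), (p.coeff i • A ^ i) *ᵥ b := by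
      induction (Finset.range (p.natDegree + 1)) using Finset.induction with
      | empty => simp
      | insert _ _ hne ih => rw [Finset.sum_insert hne, Finset.sum_insert hne, Matrix.add_mulVec, ih]
    rw [e1] at h
    rw [← h]
    exact Finset.sum_congr rfl fun i _ => (Matrix.smul_mulVec _ _ _).symm
  have hlc : p.coeff d ≠ 0 := by
    rw [hd]
    exact fun h0 => hp (Polynomial.leadingCoeff_eq_zero.mp h0)
  have hAd : (A ^ d) *ᵥ b ∈ W := by
    rw [Finset.sum_range_succ] at hsum
    have : (A ^ d) *ᵥ b
        = (-(p.coeff d)⁻¹) • ∑ i ∈ Finset.range d, p.coeff i • ((A ^ i) *ᵥ b) := by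
      have h2 := eq_neg_of_add_eq_zero_right hsum
      calc (A ^ d) *ᵥ b = (p.coeff d)⁻¹ • (p.coeff d • ((A ^ d) *ᵥ b)) := by
            rw [smul_smul, inv_mul_cancel₀ hlc, one_smul]
        _ = (-(p.coeff d)⁻¹) • ∑ i ∈ Finset.range d, p.coeff i • ((A ^ i) *ᵥ b) := by
            rw [h2, smul_neg, ← neg_smul]
    rw [this]
    exact Submodule.smul_mem _ _ (Submodule.sum_mem _ fun i hi =>
      Submodule.smul_mem _ _ (hgen i (Finset.mem_range.mp hi)))
  have hstab : ∀ w ∈ W, A *ᵥ w ∈ W := by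
    intro w hw
    induction hw using Submodule.span_induction with
    | mem x hx =>
      obtain ⟨j, rfl⟩ := hx
      rw [Matrix.mulVec_mulVec, ← pow_succ']
      rcases lt_or_eq_of_le (Nat.succ_le_of_lt j.isLt) with hj | hj
      · exact hgen _ (by omega)
      · have : (j : ℕ) + 1 = d := by omega
        rw [this]; exact hAd
    | zero => simp [Submodule.zero_mem]
    | add _ _ _ _ ha hb => rw [Matrix.mulVec_add]; exact Submodule.add_mem _ ha hb
    | smul a _ _ hx => rw [Matrix.mulVec_smul]; exact Submodule.smul_mem _ _ hx
  have hall : ∀ k : ℕ, (A ^ k) *ᵥ b ∈ W := by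
    intro k
    induction k with
    | zero =>
      rcases Nat.eq_zero_or_pos d with h0 | h0
      · simpa [h0] using hAd
      · exact hgen 0 h0
    | succ k ih =>
      rw [pow_succ', ← Matrix.mulVec_mulVec]
      exact hstab _ ih
  have htop : W = ⊤ := by
    rw [eq_top_iff, ← hreach]
    exact Submodule.span_le.mpr (by rintro _ ⟨k, rfl⟩; exact hall k)
  have hle : n ≤ d := by
    have := finrank_le_of_span_eq_top (R := ℂ)
      (v := fun j : Fin d => (A ^ (j : ℕ)) *ᵥ b) (by rw [← hW]; exact htop)
    simpa using this
  omega

lemma aux_unit {n : ℕ} {A : Matrix (Fin n) (Fin n) ℂ} (hA : SchurStable A) {lam : ℂ}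
    (hlam : ‖lam‖ = 1) : IsUnit ((1 : Matrix (Fin n) (Fin n) ℂ) - lam • A) := by
  by_contra h
  have hlam0 : lam ≠ 0 := by intro h0; rw [h0] at hlam; simp at hlam
  set lu : ℂˣ := Units.mk0 lam hlam0 with hlu
  have h1 : (1 : ℂ) ∈ spectrum ℂ (lu • A) := by
    rw [spectrum.mem_iff]
    simpa [Units.smul_def, hlu] using h
  rw [spectrum.unit_smul_eq_smul] at h1
  obtain ⟨z, hz, hz1⟩ := h1
  have hzlt := hA z hz
  have : ‖(lu : ℂ)‖ * ‖z‖ = 1 := by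
    rw [← norm_mul]
    simp only [Units.smul_def, smul_eq_mul] at hz1
    rw [hz1]; simp
  rw [show ((lu : ℂ)) = lam from rfl, hlam, one_mul] at this
  rw [this] at hzlt; exact lt_irrefl _ hzlt

lemma aux_gv_li {n m : ℕ} {A : Matrix (Fin n) (Fin n) ℂ} {b : Fin n → ℂ}
    (hA : SchurStable A) (hreach : Reachable A b) (hm : m < n)
    {θ : Fin m → ℝ} (hθmem : ∀ k, θ k ∈ Set.Ico (0 : ℝ) (2 * Real.pi))
    (hθinj : Function.Injective θ) :
    LinearIndependent ℂ (fun k : Fin m => Gv A b (θ k)) := by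
  classical
  rw [Fintype.linearIndependent_iff]
  intro g hg k
  set lam : Fin m → ℂ := fun j => Complex.exp (-(θ j : ℂ) * Complex.I) with hlam
  have hnorm : ∀ j, ‖lam j‖ = 1 := by
    intro j
    simp [hlam, Complex.norm_exp]
  have hlam0 : ∀ j, lam j ≠ 0 := fun j => Complex.exp_ne_zero _
  have hlaminj : Function.Injective lam := by
    intro a b' hab
    apply hθinj
    rw [hlam] at hab
    simp only at hab
    rw [Complex.exp_eq_exp_iff_exists_int] at hab
    obtain ⟨z, hz⟩ := hab
    have him := congrArg Complex.im hz
    simp [Complex.add_im, Complex.mul_im] at him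
    -- him : -(θ a) = -(θ b') + z * (2 * π)  (roughly)
    have ha := hθmem a; have hb := hθmem b'
    simp only [Set.mem_Ico] at ha hb
    have hπ := Real.pi_pos
    have hz0 : z = 0 := by
      rcases lt_trichotomy z 0 with h0 | h0 | h0
      · have hz1 : z ≤ -1 := by omega
        have : (z : ℝ) ≤ -1 := by exact_mod_cast hz1
        nlinarith
      · exact h0
      · have : (1 : ℝ) ≤ (z : ℝ) := by exact_mod_cast h0
        nlinarith
    rw [hz0] at him
    simp at him
    linarith [him]
  have hunit : ∀ j, IsUnit ((1 : Matrix (Fin n) (Fin n) ℂ) - lam j • A) :=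
    fun j => aux_unit hA (hnorm j)
  set f : Fin m → ℂ[X] := fun j => 1 - C (lam j) * X with hf
  have hfeval : ∀ j, aeval A (f j) = 1 - lam j • A := by
    intro j
    simp [hf, Algebra.smul_def]
  set p : ℂ[X] := ∑ k, C (g k) * ∏ j ∈ Finset.univ.erase k, f j with hp
  have hGv : ∀ j, Gv A b (θ j) = ((1 : Matrix (Fin n) (Fin n) ℂ) - lam j • A)⁻¹ *ᵥ b := by
    intro j; rfl
  have hkey : ∀ j, (aeval A (∏ i ∈ Finset.univ.erase j, f i)) *ᵥ b
      = (aeval A (∏ i, f i)) *ᵥ Gv A b (θ j) := by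
    intro j
    have hprod : (∏ i, f i) = (∏ i ∈ Finset.univ.erase j, f i) * f j := by
      rw [← Finset.prod_erase_mul Finset.univ f (Finset.mem_univ j)]
    rw [hGv, hprod, _root_.map_mul, hfeval, Matrix.mulVec_mulVec, Matrix.mul_assoc,
      Matrix.mul_nonsing_inv _ ((Matrix.isUnit_iff_isUnit_det _).mp (hunit j)),
      Matrix.mul_one]
  have hpb : (aeval A p) *ᵥ b = 0 := by
    have e1 : (aeval A p) *ᵥ b
        = ∑ k, g k • ((aeval A (∏ i ∈ Finset.univ.erase k, f i)) *ᵥ b) := by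
      rw [hp, map_sum]
      rw [aux_sum_mulVec Finset.univ
        (fun k => aeval A (C (g k) * ∏ j ∈ Finset.univ.erase k, f j)) b]
      refine Finset.sum_congr rfl fun k _ => ?_
      rw [_root_.map_mul, aeval_C, ← Matrix.smul_mulVec, Algebra.smul_def]
    rw [e1]
    have e2 : ∀ k : Fin m, g k • ((aeval A (∏ i ∈ Finset.univ.erase k, f i)) *ᵥ b)
        = (aeval A (∏ i, f i)) *ᵥ (g k • Gv A b (θ k)) := by
      intro k
      rw [hkey, Matrix.mulVec_smul]
    rw [Finset.sum_congr rfl fun k _ => e2 k]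
    have e3 := map_sum (Matrix.mulVecLin (aeval A (∏ i, f i)))
      (fun k => g k • Gv A b (θ k)) Finset.univ
    simp only [Matrix.mulVecLin_apply] at e3
    rw [← e3, hg, Matrix.mulVec_zero]
  have hdeg : p.natDegree < n := by
    have hfd : ∀ j, (f j).natDegree ≤ 1 := by
      intro j
      rw [hf]
      refine le_trans (Polynomial.natDegree_sub_le _ _) ?_
      simp [Polynomial.natDegree_C_mul_le]
      exact le_trans (Polynomial.natDegree_mul_le) (by simp)
    have : p.natDegree ≤ m - 1 := by
      rw [hp]
      refine Polynomial.natDegree_sum_le_of_forall_le _ _ fun i _ => ?_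
      refine le_trans (Polynomial.natDegree_mul_le) ?_
      simp only [Polynomial.natDegree_C, zero_add]
      refine le_trans (Polynomial.natDegree_prod_le _ _) ?_
      refine le_trans (Finset.sum_le_card_nsmul _ _ 1 fun j _ => hfd j) ?_
      simp [Finset.card_erase_of_mem]
    omega
  have hp0 : p = 0 := aux_poly_ann hreach hdeg hpb
  have hev := congrArg (Polynomial.eval (lam k)⁻¹) hp0
  rw [hp] at hev
  simp only [Polynomial.eval_finset_sum, Polynomial.eval_mul, Polynomial.eval_C,
    Polynomial.eval_prod, Polynomial.eval_zero] at hev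
  rw [Finset.sum_eq_single k] at hev
  · have hprodne : (∏ j ∈ Finset.univ.erase k, Polynomial.eval (lam k)⁻¹ (f j)) ≠ 0 := by
      rw [Finset.prod_ne_zero_iff]
      intro j hj
      rw [hf]
      simp only [Polynomial.eval_sub, Polynomial.eval_one, Polynomial.eval_mul,
        Polynomial.eval_C, Polynomial.eval_X]
      intro h0
      have : lam j * (lam k)⁻¹ = 1 := by linear_combination -h0
      rw [mul_inv_eq_one₀ (hlam0 k)] at this
      exact (Finset.mem_erase.mp hj).1 (hlaminj this)
    exact (mul_eq_zero.mp hev).resolve_right hprodne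
  · intro k' _ hk'
    have : Polynomial.eval (lam k)⁻¹ (f k) = 0 := by
      rw [hf]
      simp only [Polynomial.eval_sub, Polynomial.eval_one, Polynomial.eval_mul,
        Polynomial.eval_C, Polynomial.eval_X]
      rw [mul_inv_cancel₀ (hlam0 k), sub_self]
    rw [Finset.prod_eq_zero (Finset.mem_erase.mpr ⟨Ne.symm hk', Finset.mem_univ k⟩) this,
      mul_zero]
  · intro hk; exact absurd (Finset.mem_univ k) hk

theorem stmt19 {n m : ℕ} (A : Matrix (Fin n) (Fin n) ℂ) (b : Fin n → ℂ)
    (hA : SchurStable A) (hreach : Reachable A b) (hm : m < n)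
    (θ : Fin m → ℝ) (hθmem : ∀ k, θ k ∈ Set.Ico (0 : ℝ) (2 * Real.pi))
    (hθinj : Function.Injective θ)
    (c : Fin m → ℂ) (hc : ∀ k, c k ≠ 0)
    (x : Fin n → ℂ) (hx : x = ∑ k, c k • Gv A b (θ k))
    (q : Fin n → ℂ) (Y : Matrix (Fin n) (Fin n) ℂ) (hY : Y.IsHermitian)
    (hker : ∀ θ' : ℝ, star (Gv A b θ') ⬝ᵥ (Y *ᵥ Gv A b θ') = 0)
    (hinterp : ∀ k, star (Gv A b (θ k)) ⬝ᵥ q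
      = (c k / (‖c k‖ : ℂ)) * (enorm (Gv A b (θ k)) : ℂ))
    (hpsd : (blockD Y q).PosSemidef)
    (u : Fin m → ℂ) (hu : u = fun k => (c k / (‖c k‖ : ℂ)) * (enorm (Gv A b (θ k)) : ℂ))
    (v : Fin m → (Fin n ⊕ Unit → ℂ))
    (hv : v = fun k => Sum.elim (Gv A b (θ k)) (fun _ => -(star (u k)))) :
    (∀ k, (blockD Y q) *ᵥ v k = 0) ∧ LinearIndependent ℂ v ∧
      (blockD Y q).rank ≤ n + 1 - m := by
  classical
  have hli : LinearIndependent ℂ (fun k => Gv A b (θ k)) :=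
    aux_gv_li hA hreach hm hθmem hθinj
  have hliv : LinearIndependent ℂ v := by
    apply LinearIndependent.of_comp (LinearMap.funLeft ℂ ℂ Sum.inl)
    have he : ((LinearMap.funLeft ℂ ℂ Sum.inl) ∘ v) = fun k => Gv A b (θ k) := by
      subst hv; funext k; rfl
    rw [he]; exact hli
  have hker0 : ∀ k, (blockD Y q) *ᵥ v k = 0 := by
    intro k
    set w := Gv A b (θ k) with hw
    set e : ℝ := enorm w with he
    have hq1 : star w ⬝ᵥ q = u k := by rw [hu]; exact hinterp k
    have hq2 : star q ⬝ᵥ w = star (u k) := by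
      rw [Matrix.star_dotProduct, hq1]
    have hS : star w ⬝ᵥ w = ((∑ i, Complex.normSq (w i) : ℝ) : ℂ) := by
      push_cast
      simp [dotProduct, Complex.normSq_eq_conj_mul_self]
    have hSe : ((∑ i, Complex.normSq (w i) : ℝ)) = e ^ 2 := by
      rw [he]
      unfold _root_.enorm
      rw [Real.sq_sqrt (Finset.sum_nonneg fun i _ => Complex.normSq_nonneg _)]
    have huu : star (u k) * u k = ((e : ℂ)) ^ 2 := by
      have h1 : star (u k) * u k = (Complex.normSq (u k) : ℂ) := by
        rw [Complex.star_def, mul_comm, Complex.mul_conj]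
      have h2 : Complex.normSq (u k) = e ^ 2 := by
        rw [hu]
        simp only
        rw [Complex.normSq_mul, Complex.normSq_div, Complex.normSq_ofReal,
          Complex.normSq_ofReal, Complex.normSq_eq_norm_sq]
        have hcne : ‖c k‖ ≠ 0 := by
          simpa using norm_ne_zero_iff.mpr (hc k)
        rw [← hw, ← he]
        field_simp
      rw [h1, h2]
      push_cast
      ring
    have hDv : (blockD Y q) *ᵥ v k = Sum.elim
        (w + Y *ᵥ w + (-(star (u k))) • q)
        (fun _ => star q ⬝ᵥ w + (-(star (u k)))) := by
      rw [hv]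
      simp only [blockD]
      rw [Matrix.fromBlocks_mulVec]
      funext i
      cases i with
      | inl i =>
        simp [Matrix.add_mulVec, Matrix.one_mulVec, Matrix.mulVec, dotProduct, mul_comm, hw]
      | inr t =>
        simp [Matrix.mulVec, dotProduct, mul_comm, hw]
    have hquad : star (v k) ⬝ᵥ ((blockD Y q) *ᵥ v k) = 0 := by
      rw [hDv, hv]
      have hstar : star (Sum.elim w fun _ => -(star (u k)))
          = Sum.elim (star w) (fun _ : Unit => -(u k)) := by
        funext i
        cases i <;> simp
      simp only
      rw [hstar, sumElim_dotProduct_sumElim]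
      have hunit : (fun _ : Unit => -(u k)) ⬝ᵥ (fun _ => star q ⬝ᵥ w + (-(star (u k))))
          = -(u k) * (star q ⬝ᵥ w) + u k * star (u k) := by
        simp [dotProduct]
        ring
      rw [hunit, dotProduct_add, dotProduct_add, dotProduct_smul,
        hker (θ k), hq1, hq2, hS, hSe, smul_eq_mul]
      push_cast
      linear_combination -huu
    exact (hpsd.dotProduct_mulVec_zero_iff _).mp hquad
  refine ⟨hker0, hliv, ?_⟩
  have hspanle : Submodule.span ℂ (Set.range v) ≤ LinearMap.ker (blockD Y q).mulVecLin := by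
    rw [Submodule.span_le]
    rintro _ ⟨k, rfl⟩
    simp only [SetLike.mem_coe, LinearMap.mem_ker, Matrix.mulVecLin_apply]
    exact hker0 k
  have h1 : m ≤ Module.finrank ℂ (LinearMap.ker (blockD Y q).mulVecLin) := by
    have := Submodule.finrank_mono hspanle
    rwa [finrank_span_eq_card hliv, Fintype.card_fin] at this
  have h2 := LinearMap.finrank_range_add_finrank_ker ((blockD Y q).mulVecLin)
  have h3 : Module.finrank ℂ (Fin n ⊕ Unit → ℂ) = n + 1 := by
    simp
  rw [h3] at h2
  have hrank : (blockD Y q).rank = Module.finrank ℂ (LinearMap.range (blockD Y q).mulVecLin) :=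
    rfl
  omega
end
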